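/- arXiv:2411.16525 — 2 statements merged into one kernel-verified Lean document; each statement's English description precedes it below -/
import Mathlib

section
/- Fix integers d, L, L_p ≥ 1 and δ ∈ (0,1) with 1/δ an integer. For every function h: [0,1]^{d×(L_p+L)} → G_{δ,(L_p+L)} that is constant on each quantization cell, there exists a transformer τ in the class 𝒯_A^{1,1,4} on sequences of length L_p+L (i.e. a composition of finitely many width-4 feed-forward layers, one single-head hidden-size-1 self-attention layer with residual connection, and finitely many width-4 feed-forward layers, applied after adding the positional encoding E with E_{i,j} = j−1) such that τ([P, X])_{:,L_p:} = h([P, X])_{:,L_p:} for every P ∈ G_{δ,L_p} and every X ∈ [0,1)^{d×L}. -/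
/-- Columnwise softmax of a vector `a ∈ ℝ^L`. -/
noncomputable def smax {L : ℕ} (a : Fin L → ℝ) : Fin L → ℝ :=
  fun i => Real.exp (a i) / ∑ j, Real.exp (a j)

/-- Matrix–vector product for matrices viewed as `Fin a → Fin b → ℝ`. -/
def mvec {a b : ℕ} (W : Fin a → Fin b → ℝ) (v : Fin b → ℝ) : Fin a → ℝ :=
  fun i => ∑ j, W i j * v j

/-- The `k`-th column of a `d × n` array. -/
def column {d n : ℕ} (Z : Fin d → Fin n → ℝ) (k : Fin n) : Fin d → ℝ :=
  fun i => Z i k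

/-- Single-head self-attention with residual connection:
`f^{SA}(Z)_{:,k} = Z_{:,k} + W_O (W_V Z) softmax[(W_K Z)ᵀ (W_Q Z_{:,k})]`. -/
noncomputable def saLayer {d s n : ℕ} (WO : Fin d → Fin s → ℝ)
    (WV WK WQ : Fin s → Fin d → ℝ) (Z : Fin d → Fin n → ℝ) : Fin d → Fin n → ℝ :=
  fun i k => Z i k +
    mvec WO (fun t => ∑ l,
      mvec WV (column Z l) t *
        smax (fun l' => ∑ t', mvec WK (column Z l') t' * mvec WQ (column Z k) t') l) i

/-- Tokenwise feed-forward layer with residual connection: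
`f^{FF}(Z)_{:,k} = Z_{:,k} + W^{(2)} φ(W^{(1)} Z_{:,k} + b^{(1)}) + b^{(2)}`. -/
noncomputable def ffLayer {d n r : ℕ} (φ : ℝ → ℝ) (W1 : Fin r → Fin d → ℝ)
    (W2 : Fin d → Fin r → ℝ) (b1 : Fin r → ℝ) (b2 : Fin d → ℝ)
    (Z : Fin d → Fin n → ℝ) : Fin d → Fin n → ℝ :=
  fun i k => Z i k + mvec W2 (fun j => φ (mvec W1 (column Z k) j + b1 j)) i + b2 i

/-- A piecewise-linear activation with at most three pieces, at least one constant. -/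
def PL3 (φ : ℝ → ℝ) : Prop :=
  ∃ t₁ t₂ a₁ c₁ a₂ c₂ a₃ c₃ : ℝ, t₁ ≤ t₂ ∧ (a₁ = 0 ∨ a₂ = 0 ∨ a₃ = 0) ∧
    (∀ x, x < t₁ → φ x = a₁ * x + c₁) ∧
    (∀ x, t₁ ≤ x → x < t₂ → φ x = a₂ * x + c₂) ∧
    (∀ x, t₂ ≤ x → φ x = a₃ * x + c₃)

/-- A width-4 feed-forward layer with admissible piecewise-linear activation. -/
def IsFF4 {d n : ℕ} (f : (Fin d → Fin n → ℝ) → Fin d → Fin n → ℝ) : Prop :=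
  ∃ (φ : ℝ → ℝ) (W1 : Fin 4 → Fin d → ℝ) (W2 : Fin d → Fin 4 → ℝ)
    (b1 : Fin 4 → ℝ) (b2 : Fin d → ℝ),
      PL3 φ ∧ f = ffLayer φ W1 W2 b1 b2

/-- A single-head hidden-size-1 self-attention layer. -/
def IsSA1 {d n : ℕ} (f : (Fin d → Fin n → ℝ) → Fin d → Fin n → ℝ) : Prop :=
  ∃ (WO : Fin d → Fin 1 → ℝ) (WV WK WQ : Fin 1 → Fin d → ℝ), f = saLayer WO WV WK WQ

/-- Adding the positional encoding `E` with `E_{i,j} = j − 1` (0-indexed: `E_{i,j} = j`). -/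
def addPE {d n : ℕ} (Z : Fin d → Fin n → ℝ) : Fin d → Fin n → ℝ :=
  fun i j => Z i j + (j : ℝ)

/-- Composition of a list of layers. -/
def composeList {β : Type*} (l : List (β → β)) : β → β :=
  l.foldr (· ∘ ·) id

/-- The transformer class `𝒯_A^{1,1,4}`: finitely many width-4 feed-forward layers, one
single-head hidden-size-1 self-attention layer, finitely many width-4 feed-forward
layers, applied after adding the positional encoding. -/
def InTA {d n : ℕ} (τ : (Fin d → Fin n → ℝ) → Fin d → Fin n → ℝ) : Prop :=
  ∃ (fs gs : List ((Fin d → Fin n → ℝ) → Fin d → Fin n → ℝ))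
    (sa : (Fin d → Fin n → ℝ) → Fin d → Fin n → ℝ),
      (∀ f ∈ fs, IsFF4 f) ∧ (∀ g ∈ gs, IsFF4 g) ∧ IsSA1 sa ∧
      τ = fun Z => composeList fs (sa (composeList gs (addPE Z)))

/-- The unit cube `[0,1]^{d×m}`. -/
def cube (d m : ℕ) : Set (Fin d → Fin m → ℝ) :=
  {X | ∀ i j, X i j ∈ Set.Icc (0 : ℝ) 1}

/-- Membership in the grid `G_{δ,m} = {0, δ, 2δ, …, 1−δ}^{d×m}`. -/
def inGrid {d m : ℕ} (δ : ℝ) (M : Fin d → Fin m → ℝ) : Prop :=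
  ∀ i j, ∃ k : ℕ, M i j = (k : ℝ) * δ ∧ (k : ℝ) * δ ≤ 1 - δ

/-- Column concatenation `[P, X]` of `P ∈ ℝ^{d×L_p}` and `X ∈ ℝ^{d×L}`. -/
def concat {d Lp L : ℕ} (P : Fin d → Fin Lp → ℝ) (X : Fin d → Fin L → ℝ) :
    Fin d → Fin (Lp + L) → ℝ :=
  fun i j =>
    if h : (j : ℕ) < Lp then P i ⟨j, h⟩
    else X i ⟨(j : ℕ) - Lp, by have := j.isLt; omega⟩

/-- The last `L` columns `M_{:,L_p:}` of `M ∈ ℝ^{d×(L_p+L)}`. -/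
def lastCols {d : ℕ} (Lp L : ℕ) (M : Fin d → Fin (Lp + L) → ℝ) :
    Fin d → Fin L → ℝ :=
  fun i j => M i ⟨Lp + (j : ℕ), by have := j.isLt; omega⟩


namespace T14

open Finset

/-! ### Scalar step maps -/

noncomputable def clampR (x : ℝ) : ℝ := max 0 (min x 1)

lemma clampR_nonpos {x : ℝ} (hx : x ≤ 0) : clampR x = 0 := by
  unfold clampR
  have : min x 1 ≤ 0 := le_trans (min_le_left _ _) hx
  exact max_eq_left this

lemma clampR_mem {x : ℝ} (h0 : 0 ≤ x) (h1 : x ≤ 1) : clampR x = x := by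
  unfold clampR
  rw [min_eq_left h1, max_eq_right h0]

lemma clampR_ge {x : ℝ} (h : 1 ≤ x) : clampR x = 1 := by
  unfold clampR
  rw [min_eq_right h]
  exact max_eq_right zero_le_one

noncomputable def sStep (T c y : ℝ) : ℝ := y + if T ≤ y then c else 0

noncomputable def chainStep (t C : ℕ → ℝ) : ℕ → ℝ → ℝ
  | 0, y => y
  | (K+1), y => sStep (t (K+1) + C K) (C (K+1) - C K) (chainStep t C K y)

lemma chain_eval (t C : ℕ → ℝ) (hC0 : C 0 = 0) :
    ∀ (K : ℕ) (y : ℝ) (s : ℕ), s ≤ K →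
    (s = 0 ∨ t s ≤ y) →
    (∀ r, s < r → r ≤ K → y < t r) →
    (∀ r, s < r → r ≤ K → t (s+1) + C s ≤ t r + C (r-1)) →
    (∀ r, 1 ≤ r → r + 1 ≤ K → t r ≤ t (r+1)) →
    chainStep t C K y = y + C s := by
  intro K
  induction K with
  | zero =>
    intro y s hs _ _ _ _
    interval_cases s
    simp [chainStep, hC0]
  | succ K ih =>
    intro y s hsK hw hlt hH hmono
    rcases Nat.lt_or_ge s (K+1) with hcase | hcase
    · -- s ≤ K : last step does not fire
      have hsK' : s ≤ K := Nat.lt_succ_iff.mp hcase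
      have hrec : chainStep t C K y = y + C s :=
        ih y s hsK' hw (fun r h1 h2 => hlt r h1 (le_trans h2 (Nat.le_succ K)))
          (fun r h1 h2 => hH r h1 (le_trans h2 (Nat.le_succ K)))
          (fun r h1 h2 => hmono r h1 (le_trans h2 (Nat.le_succ K)))
      have hylt : y < t (s+1) := hlt (s+1) (Nat.lt_succ_self s) (Nat.succ_le_succ hsK')
      have hle : t (s+1) + C s ≤ t (K+1) + C K := by
        have := hH (K+1) (by omega) le_rfl
        simpa using this
      have hno : ¬ (t (K+1) + C K ≤ y + C s) := by linarith
      show sStep (t (K+1) + C K) (C (K+1) - C K) (chainStep t C K y) = y + C s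
      rw [hrec]
      unfold sStep
      rw [if_neg hno]
      ring
    · -- s = K+1 : last step fires
      have hs : s = K + 1 := le_antisymm hsK hcase
      subst hs
      have hty : t (K+1) ≤ y := by
        rcases hw with h | h
        · omega
        · exact h
      have hrec : chainStep t C K y = y + C K := by
        apply ih y K le_rfl
        · rcases Nat.eq_zero_or_pos K with h0 | hpos
          · exact Or.inl h0
          · right
            have : t K ≤ t (K+1) := hmono K hpos le_rfl
            linarith
        · intro r h1 h2; omega
        · intro r h1 h2; omega
        · intro r h1 h2; exact hmono r h1 (le_trans h2 (Nat.le_succ K))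
      show sStep (t (K+1) + C K) (C (K+1) - C K) (chainStep t C K y) = y + C (K+1)
      rw [hrec]
      unfold sStep
      rw [if_pos (by linarith)]
      ring

noncomputable def pairMap (a r y : ℝ) : ℝ :=
  y - r * clampR ((y - a)/r) + r * clampR ((y - a)/r - 1)

noncomputable def pairChain (a : ℕ → ℝ) (r0 : ℝ) : ℕ → ℝ → ℝ
  | 0, y => y
  | (K+1), y => pairMap (a (K+1)) r0 (pairChain a r0 K y)

lemma pairChain_eval (a : ℕ → ℝ) (r0 : ℝ) (hr0 : 0 < r0) (ν : ℕ) (hν : 1 ≤ ν)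
    (Hsep1 : ∀ ν', 1 ≤ ν' → ν' < ν → a ν' + 2*r0 ≤ a ν)
    (Hsep2 : ∀ ν', ν < ν' → a ν + r0 ≤ a ν') :
    ∀ (K : ℕ) (y : ℝ), a ν ≤ y → y < a ν + r0 →
      pairChain a r0 K y = if ν ≤ K then a ν else y := by
  intro K
  induction K with
  | zero =>
    intro y h1 h2
    rw [if_neg (by omega)]
    rfl
  | succ K ih =>
    intro y h1 h2
    show pairMap (a (K+1)) r0 (pairChain a r0 K y) = _
    rw [ih y h1 h2]
    by_cases hK : ν ≤ K
    · -- inner value is a ν; K+1 > ν, so this pairMap is the identity on it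
      rw [if_pos hK, if_pos (by omega)]
      have hsep := Hsep2 (K+1) (by omega)
      unfold pairMap
      have harg : (a ν - a (K+1))/r0 ≤ -1 := by
        rw [div_le_iff₀ hr0]
        linarith
      rw [clampR_nonpos (by linarith), clampR_nonpos (by linarith)]
      ring
    · rw [if_neg hK]
      by_cases heq : ν = K + 1
      · -- the matching layer: send y to a ν
        subst heq
        rw [if_pos le_rfl]
        unfold pairMap
        have h0 : 0 ≤ (y - a (K+1))/r0 := div_nonneg (by linarith) (le_of_lt hr0)
        have h1' : (y - a (K+1))/r0 < 1 := by
          rw [div_lt_one hr0]; linarith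
        rw [clampR_mem h0 (le_of_lt h1'), clampR_nonpos (by linarith)]
        field_simp
        ring
      · -- K+1 < ν : identity on y (both clamps saturate at 1)
        have hlt : K + 1 < ν := by omega
        rw [if_neg (by omega)]
        have hsep := Hsep1 (K+1) (by omega) hlt
        unfold pairMap
        have harg : 2 ≤ (y - a (K+1))/r0 := by
          rw [le_div_iff₀ hr0]; linarith
        rw [clampR_ge (by linarith), clampR_ge (by linarith)]
        ring

/-! ### Digit lemmas -/

lemma finDigitLt : ∀ (P : ℕ) (b : ℕ) (a : Fin P → ℕ), 0 < b → (∀ p, a p < b) →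
    (∑ p, a p * b^(p:ℕ)) < b^P := by
  intro P
  induction P with
  | zero => intro b a hb _; simpa using hb
  | succ P ih =>
    intro b a hb ha
    rw [Fin.sum_univ_succ]
    have h1 : ∑ p : Fin P, a p.succ * b^((p.succ : ℕ)) = (∑ p : Fin P, a (p.succ) * b^(p:ℕ)) * b := by
      rw [Finset.sum_mul]
      congr 1
      funext p
      rw [Fin.val_succ, pow_succ]
      ring
    rw [h1]
    have h2 : (∑ p : Fin P, a (p.succ) * b^(p:ℕ)) < b^P := ih b (fun p => a p.succ) hb (fun p => ha p.succ)
    have h3 : a 0 < b := ha 0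
    have : a 0 * b^((0:Fin (P+1)):ℕ) = a 0 := by simp
    rw [this, pow_succ]
    nlinarith

lemma finDigitInj : ∀ (P : ℕ) (b : ℕ) (a a' : Fin P → ℕ), 0 < b → (∀ p, a p < b) →
    (∀ p, a' p < b) → (∑ p, a p * b^(p:ℕ)) = (∑ p, a' p * b^(p:ℕ)) → ∀ p, a p = a' p := by
  intro P
  induction P with
  | zero => intro b a a' _ _ _ _ p; exact absurd p.isLt (by omega)
  | succ P ih =>
    intro b a a' hb ha ha' heq p
    have hshape : ∀ (f : Fin (P+1) → ℕ), (∑ p, f p * b^(p:ℕ)) = f 0 + b * (∑ p : Fin P, f p.succ * b^(p:ℕ)) := by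
      intro f
      rw [Fin.sum_univ_succ]
      congr 1
      · simp
      · rw [Finset.mul_sum]
        congr 1
        funext p
        rw [Fin.val_succ, pow_succ]
        ring
    rw [hshape a, hshape a'] at heq
    have h0 : a 0 = a' 0 := by
      have hm : (a 0 + b * (∑ p : Fin P, a p.succ * b^(p:ℕ))) % b = a 0 := by
        rw [Nat.add_mul_mod_self_left, Nat.mod_eq_of_lt (ha 0)]
      have hm' : (a' 0 + b * (∑ p : Fin P, a' p.succ * b^(p:ℕ))) % b = a' 0 := by
        rw [Nat.add_mul_mod_self_left, Nat.mod_eq_of_lt (ha' 0)]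
      rw [← hm, ← hm', heq]
    have hsum : (∑ p : Fin P, a p.succ * b^(p:ℕ)) = ∑ p : Fin P, a' p.succ * b^(p:ℕ) := by
      have := heq
      rw [h0] at this
      have h2 : b * (∑ p : Fin P, a p.succ * b^(p:ℕ)) = b * (∑ p : Fin P, a' p.succ * b^(p:ℕ)) := by omega
      exact Nat.eq_of_mul_eq_mul_left hb h2
    have hrec := ih b (fun p => a p.succ) (fun p => a' p.succ) hb (fun p => ha p.succ) (fun p => ha' p.succ) hsum
    rcases Fin.eq_zero_or_eq_succ p with h | ⟨p', rfl⟩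
    · rw [h]; exact h0
    · exact hrec p'

end T14
namespace T14

open Finset

/-! ### One-coordinate layers -/

def coordMap {d n : ℕ} (i₀ : Fin d) (g : ℝ → ℝ) (Z : Fin d → Fin n → ℝ) :
    Fin d → Fin n → ℝ :=
  fun i k => if i = i₀ then g (Z i k) else Z i k

lemma coordMap_comp {d n : ℕ} (i₀ : Fin d) (g g' : ℝ → ℝ) :
    (coordMap (n := n) i₀ g) ∘ (coordMap i₀ g') = coordMap i₀ (g ∘ g') := by
  funext Z i k
  simp only [Function.comp, coordMap]
  by_cases h : i = i₀ <;> simp [h]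

lemma isFF4_sStep {d n : ℕ} (i₀ : Fin d) (T c : ℝ) :
    IsFF4 (coordMap (n := n) i₀ (sStep T c)) := by
  classical
  refine ⟨fun x => if 0 ≤ x then c else 0,
    fun _ x => if x = i₀ then 1 else 0,
    fun i u => if i = i₀ ∧ u = 0 then 1 else 0,
    fun _ => -T,
    fun _ => 0, ?_, ?_⟩
  · exact ⟨0, 0, 0, 0, 0, 0, 0, c, le_rfl, Or.inl rfl,
      fun x hx => by simp only []; rw [if_neg (not_le.mpr hx)]; ring,
      fun x h1 h2 => absurd (lt_of_le_of_lt h1 h2) (lt_irrefl 0),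
      fun x hx => by simp only []; rw [if_pos hx]; ring⟩
  · funext Z i k
    unfold ffLayer coordMap mvec column
    have hx : (∑ x : Fin d, (if x = i₀ then (1:ℝ) else 0) * Z x k) = Z i₀ k := by
      simp [ite_mul]
    simp only [hx]
    by_cases h : i = i₀
    · subst h
      simp only [if_pos rfl, eq_self_iff_true, true_and]
      rw [Finset.sum_congr rfl (fun u _ => by
        rw [ite_mul, one_mul, zero_mul] : ∀ u ∈ univ, _ = if u = (0:Fin 4) then
          (if 0 ≤ Z i k + -T then c else 0) else 0)]
      rw [Finset.sum_ite_eq' univ (0 : Fin 4)]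
      simp only [Finset.mem_univ, if_true, add_zero]
      unfold sStep
      have hiff : (if 0 ≤ Z i k + -T then c else 0) = (if T ≤ Z i k then c else 0) := by
        by_cases hT : T ≤ Z i k
        · rw [if_pos hT, if_pos (by linarith)]
        · rw [if_neg hT, if_neg (fun hc => hT (by linarith))]
      rw [hiff]
    · simp only [if_neg h]
      have : ∀ u : Fin 4, (if i = i₀ ∧ u = 0 then (1:ℝ) else 0) = 0 := by
        intro u; rw [if_neg (fun hc => h hc.1)]
      simp [this]

lemma isFF4_pairMap {d n : ℕ} (i₀ : Fin d) (a r : ℝ) (hr : 0 < r) :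
    IsFF4 (coordMap (n := n) i₀ (pairMap a r)) := by
  classical
  refine ⟨clampR,
    fun _ x => if x = i₀ then 1/r else 0,
    fun i u => if i = i₀ then (if u = 0 then -r else if u = 1 then r else 0) else 0,
    fun u => if u = 0 then -(a/r) else if u = 1 then -(a/r) - 1 else -(a/r) - 1,
    fun _ => 0, ?_, ?_⟩
  · refine ⟨0, 1, 0, 0, 1, 0, 0, 1, zero_le_one, Or.inl rfl, ?_, ?_, ?_⟩
    · intro x hx; rw [clampR_nonpos (le_of_lt hx)]; ring
    · intro x h1 h2; rw [clampR_mem h1 (le_of_lt h2)]; ring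
    · intro x hx; rw [clampR_ge hx]; ring
  · funext Z i k
    unfold ffLayer coordMap mvec column
    have hx : (∑ x : Fin d, (if x = i₀ then (1:ℝ)/r else 0) * Z x k) = Z i₀ k / r := by
      rw [Finset.sum_congr rfl (fun x _ => by
        rw [ite_mul, zero_mul] : ∀ x ∈ univ, _ = if x = i₀ then 1/r * Z x k else 0)]
      rw [Finset.sum_ite_eq' univ i₀]
      simp only [Finset.mem_univ, if_true]
      ring
    simp only [hx]
    by_cases h : i = i₀
    · subst h
      simp only [if_pos rfl]
      rw [Fin.sum_univ_four]
      simp only [eq_false (show ¬((1:Fin 4) = 0) by decide),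
        eq_false (show ¬((2:Fin 4) = 0) by decide),
        eq_false (show ¬((3:Fin 4) = 0) by decide),
        eq_false (show ¬((2:Fin 4) = 1) by decide),
        eq_false (show ¬((3:Fin 4) = 1) by decide),
        eq_self_iff_true, if_true, if_false]
      unfold pairMap
      have e1 : Z i k / r + -(a/r) = (Z i k - a)/r := by ring
      have e2 : Z i k / r + (-(a/r) - 1) = (Z i k - a)/r - 1 := by ring
      rw [e1, e2]
      ring
    · simp only [if_neg h]
      have hz : ∀ u : Fin 4,
          (if i = i₀ then (if u = 0 then -r else if u = 1 then r else 0) else 0) = 0 :=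
        fun u => if_neg h
      simp [hz]

/-! ### Chains of layers -/

noncomputable def chainLayers {d n : ℕ} (i₀ : Fin d) (t C : ℕ → ℝ) :
    ℕ → List ((Fin d → Fin n → ℝ) → Fin d → Fin n → ℝ)
  | 0 => []
  | (K+1) => coordMap i₀ (sStep (t (K+1) + C K) (C (K+1) - C K)) :: chainLayers i₀ t C K

lemma chainLayers_ff4 {d n : ℕ} (i₀ : Fin d) (t C : ℕ → ℝ) :
    ∀ K, ∀ f ∈ chainLayers (n := n) i₀ t C K, IsFF4 f := by
  intro K
  induction K with
  | zero => intro f hf; simp [chainLayers] at hf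
  | succ K ih =>
    intro f hf
    rcases List.mem_cons.mp hf with rfl | hf
    · exact isFF4_sStep i₀ _ _
    · exact ih f hf

lemma composeList_chainLayers {d n : ℕ} (i₀ : Fin d) (t C : ℕ → ℝ) :
    ∀ K, composeList (chainLayers (n := n) i₀ t C K) = coordMap i₀ (chainStep t C K) := by
  intro K
  induction K with
  | zero =>
    funext Z i k
    simp only [chainLayers, composeList, List.foldr_nil, id]
    unfold coordMap chainStep
    by_cases h : i = i₀ <;> simp [h]
  | succ K ih =>
    show (coordMap i₀ (sStep (t (K+1) + C K) (C (K+1) - C K))) ∘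
      composeList (chainLayers (n := n) i₀ t C K) = _
    rw [ih, coordMap_comp]
    rfl

noncomputable def pairLayers {d n : ℕ} (i₀ : Fin d) (a : ℕ → ℝ) (r0 : ℝ) :
    ℕ → List ((Fin d → Fin n → ℝ) → Fin d → Fin n → ℝ)
  | 0 => []
  | (K+1) => coordMap i₀ (pairMap (a (K+1)) r0) :: pairLayers i₀ a r0 K

lemma pairLayers_ff4 {d n : ℕ} (i₀ : Fin d) (a : ℕ → ℝ) (r0 : ℝ) (hr : 0 < r0) :
    ∀ K, ∀ f ∈ pairLayers (n := n) i₀ a r0 K, IsFF4 f := by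
  intro K
  induction K with
  | zero => intro f hf; simp [pairLayers] at hf
  | succ K ih =>
    intro f hf
    rcases List.mem_cons.mp hf with rfl | hf
    · exact isFF4_pairMap i₀ _ _ hr
    · exact ih f hf

lemma composeList_pairLayers {d n : ℕ} (i₀ : Fin d) (a : ℕ → ℝ) (r0 : ℝ) :
    ∀ K, composeList (pairLayers (n := n) i₀ a r0 K) = coordMap i₀ (pairChain a r0 K) := by
  intro K
  induction K with
  | zero =>
    funext Z i k
    simp only [pairLayers, composeList, List.foldr_nil, id]
    unfold coordMap pairChain
    by_cases h : i = i₀ <;> simp [h]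
  | succ K ih =>
    show (coordMap i₀ (pairMap (a (K+1)) r0)) ∘ composeList (pairLayers (n := n) i₀ a r0 K) = _
    rw [ih, coordMap_comp]
    rfl

lemma composeList_append {β : Type*} (l₁ l₂ : List (β → β)) :
    composeList (l₁ ++ l₂) = composeList l₁ ∘ composeList l₂ := by
  induction l₁ with
  | nil => funext x; simp [composeList]
  | cons a l ih =>
    show composeList (a :: (l ++ l₂)) = _
    unfold composeList at *
    simp only [List.foldr_cons]
    rw [show (List.foldr (· ∘ ·) id (l ++ l₂)) = List.foldr (· ∘ ·) id l ∘ List.foldr (· ∘ ·) id l₂ from ih]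
    rfl

/-! ### Aggregating over coordinates -/

def multiL {d : ℕ} {X : Type*} (F : Fin d → List X) : List (Fin d) → List X
  | [] => []
  | (i :: l) => F i ++ multiL F l

lemma mem_multiL {d : ℕ} {X : Type*} (F : Fin d → List X) :
    ∀ (l : List (Fin d)) (f : X), f ∈ multiL F l → ∃ i, f ∈ F i := by
  intro l
  induction l with
  | nil => intro f hf; simp [multiL] at hf
  | cons a l ih =>
    intro f hf
    rcases List.mem_append.mp hf with h | h
    · exact ⟨a, h⟩
    · exact ih f h

lemma composeList_multiL {d n : ℕ} (F : Fin d → List ((Fin d → Fin n → ℝ) → Fin d → Fin n → ℝ))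
    (G : Fin d → ℝ → ℝ) (hF : ∀ i, composeList (F i) = coordMap i (G i)) :
    ∀ (l : List (Fin d)), l.Nodup →
      composeList (multiL F l) = fun Z i k => if i ∈ l then G i (Z i k) else Z i k := by
  intro l
  induction l with
  | nil =>
    intro _
    funext Z i k
    simp [multiL, composeList]
  | cons a l ih =>
    intro hnd
    have hnd' := List.nodup_cons.mp hnd
    show composeList (F a ++ multiL F l) = _
    rw [composeList_append, hF a, ih hnd'.2]
    funext Z i k
    simp only [Function.comp, coordMap]
    by_cases h : i = a
    · subst h
      rw [if_pos List.mem_cons_self, if_pos rfl, if_neg hnd'.1]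
    · rw [if_neg h]
      by_cases h2 : i ∈ l
      · rw [if_pos h2, if_pos (List.mem_cons_of_mem _ h2)]
      · rw [if_neg h2, if_neg (by simp [h, h2])]

/-! ### Attention layer evaluation -/

lemma sa_eval {d n : ℕ} (hn : 0 < n) (Z : Fin d → Fin n → ℝ) :
    saLayer (fun (_ : Fin d) (_ : Fin 1) => (1:ℝ)) (fun _ _ => (n:ℝ)) (fun _ _ => 0)
      (fun _ _ => 0) Z = fun i k => Z i k + ∑ l : Fin n, ∑ i' : Fin d, Z i' l := by
  have hn' : (n:ℝ) ≠ 0 := Nat.cast_ne_zero.mpr (by omega)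
  funext i k
  unfold saLayer mvec column smax
  simp only [zero_mul, Finset.sum_const_zero, Real.exp_zero, Fin.sum_univ_one, one_mul]
  congr 1
  rw [Finset.sum_const, Finset.card_univ, Fintype.card_fin]
  apply Finset.sum_congr rfl
  intro l _
  rw [← Finset.mul_sum, nsmul_eq_mul, mul_one]
  field_simp

end T14
namespace T14

open Finset

/-! ### Encoding numerics -/

section Enc

variable (d n q : ℕ)

def Wc : ℕ := (2*q)^(n*d+1)

def csum : ℕ := ∑ j : Fin n, (j : ℕ)

def colv (μ : Fin d → Fin n → Fin q) (j : Fin n) : ℕ :=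
  ∑ i' : Fin d, (μ i' j : ℕ) * (2*q)^(i' : ℕ)

def Mval (μ : Fin d → Fin n → Fin q) : ℕ :=
  ∑ j : Fin n, colv d n q μ j * ((2*q)^d)^(j : ℕ)

def Fval (i : Fin d) (p : Fin n × (Fin d → Fin n → Fin q)) : ℕ :=
  ((2*q)^d)^(p.1 : ℕ) * (2*q)^(i : ℕ) * (p.2 i p.1 : ℕ) + Mval d n q p.2

def Eenc (i : Fin d) (p : Fin n × (Fin d → Fin n → Fin q)) : ℕ :=
  Wc d n q * ((p.1 : ℕ) + d * csum n) + Fval d n q i p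

def Kcap : ℕ := Wc d n q * (n + d * csum n)

variable {d n q}

/-- auxiliary digits of a column, with the extra own-token digit added -/
def bcolD (i : Fin d) (k : Fin n) (μ : Fin d → Fin n → Fin q) (j : Fin n) (i' : Fin d) : ℕ :=
  (μ i' j : ℕ) + (if i' = i ∧ j = k then (μ i k : ℕ) else 0)

lemma bcolD_lt (hq : 0 < q) (i : Fin d) (k : Fin n) (μ : Fin d → Fin n → Fin q)
    (j : Fin n) (i' : Fin d) : bcolD i k μ j i' < 2*q := by
  unfold bcolD
  have h1 := (μ i' j).isLt
  have h2 := (μ i j).isLt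
  split <;> omega

def bcol (i : Fin d) (k : Fin n) (μ : Fin d → Fin n → Fin q) (j : Fin n) : ℕ :=
  ∑ i' : Fin d, bcolD i k μ j i' * (2*q)^(i' : ℕ)

lemma bcol_lt (hq : 0 < q) (i : Fin d) (k : Fin n) (μ : Fin d → Fin n → Fin q)
    (j : Fin n) : bcol i k μ j < (2*q)^d := by
  have := finDigitLt d (2*q) (bcolD i k μ j) (by omega) (bcolD_lt hq i k μ j)
  simpa [bcol] using this

lemma Fval_eq_digits (i : Fin d) (k : Fin n) (μ : Fin d → Fin n → Fin q) :
    Fval d n q i (k, μ) = ∑ j : Fin n, bcol i k μ j * ((2*q)^d)^(j : ℕ) := by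
  unfold Fval Mval bcol bcolD colv
  simp only [add_mul, ite_mul, zero_mul, Finset.sum_add_distrib, ite_and,
    Finset.sum_ite_eq', Finset.mem_univ, if_true]
  ring

lemma Fval_lt (hq : 0 < q) (i : Fin d) (p : Fin n × (Fin d → Fin n → Fin q)) :
    Fval d n q i p < Wc d n q := by
  obtain ⟨k, μ⟩ := p
  rw [Fval_eq_digits]
  have h1 : (∑ j : Fin n, bcol i k μ j * ((2*q)^d)^(j : ℕ)) < ((2*q)^d)^n :=
    finDigitLt n ((2*q)^d) (bcol i k μ) (pow_pos (by omega) d) (bcol_lt hq i k μ)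
  have h2 : ((2*q)^d)^n ≤ (2*q)^(n*d+1) := by
    rw [← pow_mul]
    exact Nat.pow_le_pow_right (by omega) (by nlinarith)
  exact lt_of_lt_of_le h1 h2

lemma Eenc_le_Kcap (hq : 0 < q) (i : Fin d) (p : Fin n × (Fin d → Fin n → Fin q)) :
    Eenc d n q i p ≤ Kcap d n q := by
  have hF := Fval_lt hq i p
  have hk : (p.1 : ℕ) + 1 ≤ n := p.1.isLt
  unfold Eenc Kcap
  have : Wc d n q * ((p.1 : ℕ) + d * csum n) + Wc d n q ≤ Wc d n q * (n + d * csum n) := by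
    rw [← Nat.mul_succ]
    exact Nat.mul_le_mul_left _ (by omega)
  omega

lemma Eenc_inj (hq : 0 < q) (i : Fin d) : Function.Injective (Eenc d n q i) := by
  intro p p' hE
  obtain ⟨k, μ⟩ := p
  obtain ⟨k', μ'⟩ := p'
  have hF := Fval_lt hq i (k, μ)
  have hF' := Fval_lt hq i (k', μ')
  unfold Eenc at hE
  have hW : 0 < Wc d n q := pow_pos (by omega) _
  -- separate quotient and remainder
  have hsep : (k : ℕ) + d * csum n = (k' : ℕ) + d * csum n ∧
      Fval d n q i (k, μ) = Fval d n q i (k', μ') := by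
    constructor
    · have e1 : (Wc d n q * ((k:ℕ) + d * csum n) + Fval d n q i (k, μ)) / Wc d n q
          = (k:ℕ) + d * csum n := by
        rw [Nat.mul_add_div hW, Nat.div_eq_of_lt hF, Nat.add_zero]
      have e2 : (Wc d n q * ((k':ℕ) + d * csum n) + Fval d n q i (k', μ')) / Wc d n q
          = (k':ℕ) + d * csum n := by
        rw [Nat.mul_add_div hW, Nat.div_eq_of_lt hF', Nat.add_zero]
      rw [← e1, ← e2, hE]
    · have e1 : (Wc d n q * ((k:ℕ) + d * csum n) + Fval d n q i (k, μ)) % Wc d n q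
          = Fval d n q i (k, μ) := by
        rw [Nat.mul_add_mod, Nat.mod_eq_of_lt hF]
      have e2 : (Wc d n q * ((k':ℕ) + d * csum n) + Fval d n q i (k', μ')) % Wc d n q
          = Fval d n q i (k', μ') := by
        rw [Nat.mul_add_mod, Nat.mod_eq_of_lt hF']
      rw [← e1, ← e2, hE]
  have hkk : k = k' := by
    have := hsep.1
    exact Fin.ext (by omega)
  subst hkk
  have hFeq := hsep.2
  rw [Fval_eq_digits, Fval_eq_digits] at hFeq
  have houter := finDigitInj n ((2*q)^d) (bcol i k μ) (bcol i k μ') (pow_pos (by omega) d)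
    (bcol_lt hq i k μ) (bcol_lt hq i k μ') hFeq
  have hinner : ∀ j : Fin n, ∀ i' : Fin d, bcolD i k μ j i' = bcolD i k μ' j i' := by
    intro j
    exact finDigitInj d (2*q) (bcolD i k μ j) (bcolD i k μ' j) (by omega)
      (bcolD_lt hq i k μ j) (bcolD_lt hq i k μ' j) (houter j)
  have hμ : μ = μ' := by
    funext i' j
    have hb := hinner j i'
    unfold bcolD at hb
    by_cases hji : i' = i ∧ j = k
    · obtain ⟨hi, hj⟩ := hji
      subst hj; subst hi
      simp at hb
      exact Fin.ext (by omega)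
    · rw [if_neg hji, if_neg hji] at hb
      exact Fin.ext (by omega)
  rw [hμ]

end Enc

end T14
namespace T14

open Finset

/-! ### Real constants and threshold data -/

section Data

variable (d n q : ℕ)

/-- `B = dn + n`, a real bound on the "analog spread" of token values. -/
def Bc : ℝ := d * n + n

def Gc : ℝ := 2 * Bc d n

def cR : ℝ := d * csum n

def tpre (δ : ℝ) (s : ℕ) : ℝ := ((s : ℝ) - 1) * δ

/-- value written by the pre-attention chain at step `s` (natural number part) -/
def CpreN (i : Fin d) (s : ℕ) : ℕ :=
  Wc d n q * ((s-1)/q) + ((2*q)^d)^((s-1)/q) * (2*q)^(i:ℕ) * ((s-1) % q)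

noncomputable def Cpre (i : Fin d) (s : ℕ) : ℝ := Bc d n * (CpreN d n q i s : ℕ)

def t12 (s : ℕ) : ℝ := Bc d n * s + cR d n - Bc d n

noncomputable def C12 (s : ℕ) : ℝ :=
  if s = 0 then 0 else Gc d n * 2^s - Bc d n * s + Bc d n

def a3 (ν : ℕ) : ℝ := Gc d n * 2^ν + cR d n

noncomputable def gstar (δ : ℝ) (h : (Fin d → Fin n → ℝ) → Fin d → Fin n → ℝ)
    (i : Fin d) (e : ℕ) : ℝ :=
  if hx : ∃ p : Fin n × (Fin d → Fin n → Fin q), Eenc d n q i p = e then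
    h (fun a b => (hx.choose.2 a b : ℝ) * δ) i hx.choose.1
  else 0

noncomputable def C4 (δ : ℝ) (h : (Fin d → Fin n → ℝ) → Fin d → Fin n → ℝ)
    (i : Fin d) (s : ℕ) : ℝ :=
  if s = 0 then 0 else gstar d n q δ h i (s-1) - Gc d n * 2^s - cR d n

end Data

lemma gstar_eval {d n q : ℕ} (hq : 0 < q) (δ : ℝ)
    (h : (Fin d → Fin n → ℝ) → Fin d → Fin n → ℝ) (i : Fin d)
    (p : Fin n × (Fin d → Fin n → Fin q)) :
    gstar d n q δ h i (Eenc d n q i p) = h (fun a b => (p.2 a b : ℝ) * δ) i p.1 := by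
  unfold gstar
  have hx : ∃ p' : Fin n × (Fin d → Fin n → Fin q), Eenc d n q i p' = Eenc d n q i p := ⟨p, rfl⟩
  rw [dif_pos hx]
  have hspec := hx.choose_spec
  have hpe : hx.choose = p := Eenc_inj hq i hspec
  rw [hpe]

lemma CpreN_mono {d n q : ℕ} (hq : 0 < q) (i : Fin d) :
    ∀ s r : ℕ, s ≤ r → r ≤ n*q → CpreN d n q i s ≤ CpreN d n q i r := by
  intro s r hsr hrK
  unfold CpreN
  set u := s - 1 with hu
  set v := r - 1 with hv
  have huv : u ≤ v := by omega
  have hdiv : u / q ≤ v / q := Nat.div_le_div_right huv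
  rcases Nat.lt_or_ge (u/q) (v/q) with hlt | hge
  · -- quotient strictly increases
    have hrpos : 1 ≤ r := by
      rcases Nat.eq_zero_or_pos r with h0 | hr
      · exfalso
        have huv2 : u = v := by omega
        rw [huv2] at hlt
        exact lt_irrefl _ hlt
      · exact hr
    have hn1 : 1 ≤ n := by
      rcases Nat.eq_zero_or_pos n with h0 | hn
      · exfalso; rw [h0] at hrK; simp at hrK; omega
      · exact hn
    have hvq : v / q < n := Nat.div_lt_of_lt_mul (by have hc : n*q = q*n := Nat.mul_comm n q; omega : v < q * n)
    have hbound : ((2*q)^d)^(u/q) * (2*q)^(i:ℕ) * (u % q) ≤ Wc d n q := by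
      have h1 : u % q < q := Nat.mod_lt _ hq
      have h2 : ((2*q)^d)^(u/q) * (2*q)^(i:ℕ) = (2*q)^(d*(u/q) + (i:ℕ)) := by
        rw [← pow_mul, ← pow_add]
      have h3 : (u % q) ≤ (2*q) - 1 := by omega
      calc ((2*q)^d)^(u/q) * (2*q)^(i:ℕ) * (u % q)
          ≤ (2*q)^(d*(u/q) + (i:ℕ)) * (2*q) := by
            rw [h2]
            apply Nat.mul_le_mul_left
            omega
        _ = (2*q)^(d*(u/q) + (i:ℕ) + 1) := by rw [pow_succ]
        _ ≤ (2*q)^(n*d+1) := by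
            apply Nat.pow_le_pow_right (by omega)
            have hud : u / q ≤ n - 1 := by omega
            have hid : (i:ℕ) ≤ d - 1 := by have := i.isLt; omega
            have hd1 : 1 ≤ d := by have := i.isLt; omega
            have hm1 : d * (u/q) ≤ d * (n-1) := Nat.mul_le_mul_left d hud
            have hm2 : d * (n-1) + d = d * n := by
              have hn' : n - 1 + 1 = n := by omega
              calc d * (n-1) + d = d * ((n-1) + 1) := by ring
                _ = d * n := by rw [hn']
            have hm3 : d * n = n * d := Nat.mul_comm d n
            omega
        _ = Wc d n q := rfl
    calc Wc d n q * (u/q) + ((2*q)^d)^(u/q) * (2*q)^(i:ℕ) * (u % q)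
        ≤ Wc d n q * (u/q) + Wc d n q := by omega
      _ = Wc d n q * (u/q + 1) := by ring
      _ ≤ Wc d n q * (v/q) := Nat.mul_le_mul_left _ (by omega)
      _ ≤ _ := Nat.le_add_right _ _
  · -- same quotient
    have heq : u / q = v / q := le_antisymm hdiv hge
    have hmod : u % q ≤ v % q := by
      have h1 := Nat.div_add_mod u q
      have h2 := Nat.div_add_mod v q
      have h3 : q * (u/q) = q * (v/q) := by rw [heq]
      omega
    rw [heq]
    have := Nat.mul_le_mul_left (((2*q)^d)^(v/q) * (2*q)^(i:ℕ)) hmod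
    calc Wc d n q * (v/q) + ((2*q)^d)^(v/q) * (2*q)^(i:ℕ) * (u % q)
        ≤ Wc d n q * (v/q) + ((2*q)^d)^(v/q) * (2*q)^(i:ℕ) * (v % q) := by
          have h := Nat.mul_le_mul_left (((2*q)^d)^(v/q) * (2*q)^(i:ℕ)) hmod
          omega
      _ = _ := rfl

lemma sum_CpreIdx (d n q : ℕ) (μ : Fin d → Fin n → Fin q) :
    (∑ l : Fin n, ∑ i' : Fin d,
      (Wc d n q * (l:ℕ) + ((2*q)^d)^(l:ℕ) * (2*q)^(i':ℕ) * (μ i' l : ℕ)))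
    = Wc d n q * (d * csum n) + Mval d n q μ := by
  unfold Mval colv csum
  have h1 : ∀ l : Fin n,
      (∑ i' : Fin d, (Wc d n q * (l:ℕ) + ((2*q)^d)^(l:ℕ) * (2*q)^(i':ℕ) * (μ i' l : ℕ)))
      = Wc d n q * (l:ℕ) * d
        + (∑ i' : Fin d, (μ i' l : ℕ) * (2*q)^(i':ℕ)) * ((2*q)^d)^(l:ℕ) := by
    intro l
    rw [Finset.sum_add_distrib, Finset.sum_const, Finset.card_univ, Fintype.card_fin,
      smul_eq_mul]
    congr 1
    · ring
    · rw [Finset.sum_mul]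
      apply Finset.sum_congr rfl
      intro i' _
      ring
  rw [Finset.sum_congr rfl (fun l _ => h1 l), Finset.sum_add_distrib]
  congr 1
  rw [← Finset.sum_mul, ← Finset.mul_sum]
  ring

end T14
open T14 in
set_option maxHeartbeats 3000000 in
/-- for every function `h : [0,1]^{d×(L_p+L)} → G_{δ,(L_p+L)}` that is
constant on quantization cells, there exists a transformer `τ ∈ 𝒯_A^{1,1,4}` with
`τ([P, X])_{:,L_p:} = h([P, X])_{:,L_p:}` for every grid prompt `P ∈ G_{δ,L_p}` and every
`X ∈ [0,1)^{d×L}`. -/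
theorem transformer_realizes_quantized_map (d L Lp : ℕ) (hd : 1 ≤ d) (hL : 1 ≤ L)
    (hLp : 1 ≤ Lp) (δ : ℝ) (hδ0 : 0 < δ) (hδ1 : δ < 1)
    (hδint : ∃ q : ℕ, (q : ℝ) * δ = 1)
    (h : (Fin d → Fin (Lp + L) → ℝ) → Fin d → Fin (Lp + L) → ℝ)
    (hgrid : ∀ X ∈ cube d (Lp + L), inGrid δ (h X))
    (hcell : ∀ X ∈ cube d (Lp + L), ∀ Y ∈ cube d (Lp + L),
      (∀ i j, ⌊X i j / δ⌋ = ⌊Y i j / δ⌋) → h X = h Y) :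
    ∃ τ : (Fin d → Fin (Lp + L) → ℝ) → Fin d → Fin (Lp + L) → ℝ,
      InTA τ ∧
      ∀ (P : Fin d → Fin Lp → ℝ) (X : Fin d → Fin L → ℝ),
        inGrid δ P → (∀ i j, X i j ∈ Set.Ico (0 : ℝ) 1) →
        lastCols Lp L (τ (concat P X)) = lastCols Lp L (h (concat P X)) := by
  classical
  obtain ⟨q, hqδ⟩ := hδint
  have hq0 : 0 < q := by
    rcases Nat.eq_zero_or_pos q with h0 | hq
    · rw [h0] at hqδ; norm_num at hqδ
    · exact hq
  have hqR : (0:ℝ) < q := by exact_mod_cast hq0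
  have hn0 : 0 < Lp + L := by omega
  have hnR : (0:ℝ) < ((Lp + L : ℕ) : ℝ) := by exact_mod_cast hn0
  have hdR : (0:ℝ) ≤ (d : ℝ) := by positivity
  have hBpos : (0:ℝ) < Bc d (Lp + L) := by
    unfold Bc
    nlinarith
  have hB2 : (2:ℝ) ≤ Bc d (Lp + L) := by
    unfold Bc
    have hd1 : (1:ℝ) ≤ (d:ℝ) := by exact_mod_cast hd
    have hn2 : (2:ℝ) ≤ ((Lp + L : ℕ) : ℝ) := by exact_mod_cast (by omega : 2 ≤ Lp + L)
    nlinarith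
  have hGpos : (0:ℝ) < Gc d (Lp + L) := by unfold Gc; linarith
  have hG1 : (1:ℝ) ≤ Gc d (Lp + L) := by unfold Gc; linarith
  set KK : ℕ := Kcap d (Lp + L) q + 1 with hKKdef
  -- the layer lists
  set preF : Fin d → List ((Fin d → Fin (Lp + L) → ℝ) → Fin d → Fin (Lp + L) → ℝ) :=
    fun i => chainLayers i (tpre δ) (Cpre d (Lp + L) q i) ((Lp + L) * q) with hpreF
  set postF : Fin d → List ((Fin d → Fin (Lp + L) → ℝ) → Fin d → Fin (Lp + L) → ℝ) :=
    fun i => chainLayers i (a3 d (Lp + L)) (C4 d (Lp + L) q δ h i) KK ++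
      (pairLayers i (a3 d (Lp + L)) (Bc d (Lp + L)) KK ++
        chainLayers i (t12 d (Lp + L)) (C12 d (Lp + L)) KK) with hpostF
  set gs := multiL preF (List.finRange d) with hgsdef
  set fs := multiL postF (List.finRange d) with hfsdef
  set WO : Fin d → Fin 1 → ℝ := fun _ _ => 1 with hWO
  set WV : Fin 1 → Fin d → ℝ := fun _ _ => ((Lp + L : ℕ) : ℝ) with hWV
  set WK : Fin 1 → Fin d → ℝ := fun _ _ => 0 with hWK
  set WQ : Fin 1 → Fin d → ℝ := fun _ _ => 0 with hWQ
  have hgsc : composeList gs =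
      fun Z i k => chainStep (tpre δ) (Cpre d (Lp + L) q i) ((Lp + L) * q) (Z i k) := by
    rw [hgsdef, composeList_multiL preF _ (fun i => composeList_chainLayers _ _ _ _)
      (List.finRange d) (List.nodup_finRange d)]
    funext Z i k
    rw [if_pos (List.mem_finRange i)]
  have hfsc : composeList fs = fun Z i k =>
      chainStep (a3 d (Lp + L)) (C4 d (Lp + L) q δ h i) KK
        (pairChain (a3 d (Lp + L)) (Bc d (Lp + L)) KK
          (chainStep (t12 d (Lp + L)) (C12 d (Lp + L)) KK (Z i k))) := by
    rw [hfsdef, composeList_multiL postF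
      (fun i => fun y => chainStep (a3 d (Lp + L)) (C4 d (Lp + L) q δ h i) KK
        (pairChain (a3 d (Lp + L)) (Bc d (Lp + L)) KK
          (chainStep (t12 d (Lp + L)) (C12 d (Lp + L)) KK y)))
      (fun i => ?_) (List.finRange d) (List.nodup_finRange d)]
    · funext Z i k
      rw [if_pos (List.mem_finRange i)]
    · rw [hpostF]
      show composeList (_ ++ (_ ++ _)) = _
      rw [composeList_append, composeList_append, composeList_chainLayers,
        composeList_pairLayers, composeList_chainLayers, coordMap_comp, coordMap_comp]
      rfl
  refine ⟨fun Z => composeList fs (saLayer WO WV WK WQ (composeList gs (addPE Z))),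
    ⟨fs, gs, saLayer WO WV WK WQ, ?_, ?_, ⟨WO, WV, WK, WQ, rfl⟩, rfl⟩, ?_⟩
  · -- post layers are FF4
    intro f hf
    obtain ⟨i, hfi⟩ := mem_multiL postF (List.finRange d) f hf
    rw [hpostF] at hfi
    rcases List.mem_append.mp hfi with h1 | h1
    · exact chainLayers_ff4 _ _ _ _ f h1
    rcases List.mem_append.mp h1 with h2 | h2
    · exact pairLayers_ff4 _ _ _ hBpos _ f h2
    · exact chainLayers_ff4 _ _ _ _ f h2
  · -- pre layers are FF4
    intro f hf
    obtain ⟨i, hfi⟩ := mem_multiL preF (List.finRange d) f hf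
    rw [hpreF] at hfi
    exact chainLayers_ff4 _ _ _ _ f hfi
  -- main evaluation
  intro P X hP hX
  set A := concat P X with hAdef
  have hA01 : ∀ (i : Fin d) (j : Fin (Lp + L)), 0 ≤ A i j ∧ A i j < 1 := by
    intro i j
    rw [hAdef]
    unfold concat
    split
    · next hj =>
      obtain ⟨m, hm1, hm2⟩ := hP i ⟨(j:ℕ), hj⟩
      rw [hm1]
      constructor
      · positivity
      · linarith
    · next hj =>
      obtain ⟨hx0, hx1⟩ := hX i ⟨(j:ℕ) - Lp, by have := j.isLt; omega⟩
      exact ⟨hx0, hx1⟩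
  have hμb : ∀ (i : Fin d) (j : Fin (Lp + L)), (⌊A i j * q⌋).toNat < q := by
    intro i j
    obtain ⟨h0, h1⟩ := hA01 i j
    have h2 : (0:ℝ) ≤ A i j * q := by positivity
    have h3 : A i j * q < q := by nlinarith
    have h4 : ⌊A i j * q⌋ < (q:ℤ) := by
      apply Int.floor_lt.mpr
      push_cast
      linarith
    have h5 : (0:ℤ) ≤ ⌊A i j * q⌋ := Int.floor_nonneg.mpr h2
    omega
  set μF : Fin d → Fin (Lp + L) → Fin q := fun i j => ⟨(⌊A i j * q⌋).toNat, hμb i j⟩ with hμFdef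
  have hμcast : ∀ (i : Fin d) (j : Fin (Lp + L)), ((μF i j : ℕ) : ℝ) = ⌊A i j * q⌋ := by
    intro i j
    have h5 : (0:ℤ) ≤ ⌊A i j * q⌋ := Int.floor_nonneg.mpr (by
      obtain ⟨h0, _⟩ := hA01 i j; positivity)
    show (((⌊A i j * q⌋).toNat : ℕ) : ℝ) = _
    rw [← Int.cast_natCast, Int.toNat_of_nonneg h5]
  have hμ1 : ∀ (i : Fin d) (j : Fin (Lp + L)),
      ((μF i j : ℕ) : ℝ) * δ ≤ A i j ∧ A i j < (((μF i j : ℕ) : ℝ) + 1) * δ := by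
    intro i j
    have hle : ((μF i j : ℕ) : ℝ) ≤ A i j * q := by
      rw [hμcast i j]; exact Int.floor_le _
    have hlt : A i j * q < ((μF i j : ℕ) : ℝ) + 1 := by
      rw [hμcast i j]; exact Int.lt_floor_add_one _
    constructor
    · nlinarith
    · nlinarith
  -- evaluate the pre-attention feed-forward chain
  have hCpre_idx : ∀ (i : Fin d) (j : Fin (Lp + L)),
      CpreN d (Lp + L) q i ((μF i j : ℕ) + (j:ℕ)*q + 1)
      = Wc d (Lp + L) q * (j:ℕ) + ((2*q)^d)^(j:ℕ) * (2*q)^(i:ℕ) * (μF i j : ℕ) := by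
    intro i j
    unfold CpreN
    have e0 : (μF i j : ℕ) + (j:ℕ)*q + 1 - 1 = (μF i j : ℕ) + (j:ℕ)*q := by omega
    rw [e0]
    have hdiv : ((μF i j : ℕ) + (j:ℕ)*q) / q = (j:ℕ) := by
      rw [Nat.add_mul_div_right _ _ hq0, Nat.div_eq_of_lt (μF i j).isLt, Nat.zero_add]
    have hmod : ((μF i j : ℕ) + (j:ℕ)*q) % q = (μF i j : ℕ) := by
      rw [Nat.add_mul_mod_self_right, Nat.mod_eq_of_lt (μF i j).isLt]
    rw [hdiv, hmod]
  have hgs_eval : composeList gs (addPE A) = fun i j => A i j + (j:ℕ)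
      + Bc d (Lp + L) * ((Wc d (Lp + L) q * (j:ℕ)
        + ((2*q)^d)^(j:ℕ) * (2*q)^(i:ℕ) * (μF i j : ℕ) : ℕ) : ℝ) := by
    rw [hgsc]
    funext i j
    show chainStep (tpre δ) (Cpre d (Lp + L) q i) ((Lp + L) * q) (A i j + (j:ℕ)) = _
    have hjq : ((j:ℕ):ℝ) * ((q:ℝ) * δ) = (j:ℕ) := by rw [hqδ, mul_one]
    rw [chain_eval (tpre δ) (Cpre d (Lp + L) q i)
      (by simp [Cpre, CpreN]) ((Lp + L) * q) (A i j + (j:ℕ)) ((μF i j : ℕ) + (j:ℕ)*q + 1)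
      ?_ (Or.inr ?_) ?_ ?_ ?_]
    · rw [Cpre, hCpre_idx]
    · -- s* ≤ n*q
      have h1 : (μF i j : ℕ) < q := (μF i j).isLt
      have h2 : (j:ℕ) < Lp + L := j.isLt
      have h3 : (j:ℕ)*q + q ≤ (Lp + L)*q := by
        have := Nat.mul_le_mul_right q (by omega : (j:ℕ) + 1 ≤ Lp + L)
        calc (j:ℕ)*q + q = ((j:ℕ) + 1)*q := by ring
          _ ≤ (Lp + L)*q := this
      omega
    · -- witness lower bound
      unfold tpre
      have hcast : ((((μF i j : ℕ) + (j:ℕ)*q + 1 : ℕ)):ℝ)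
          = ((μF i j : ℕ):ℝ) + ((j:ℕ):ℝ)*(q:ℝ) + 1 := by push_cast; ring
      rw [hcast]
      have hexp : (((μF i j : ℕ):ℝ) + ((j:ℕ):ℝ)*(q:ℝ) + 1 - 1) * δ
          = ((μF i j:ℕ):ℝ)*δ + ((j:ℕ):ℝ)*((q:ℝ)*δ) := by ring
      rw [hexp, hqδ, mul_one]
      linarith [(hμ1 i j).1]
    · -- y below later thresholds
      intro r hr1 hr2
      unfold tpre
      have hr1' : (μF i j : ℕ) + (j:ℕ)*q + 1 + 1 ≤ r := hr1
      have hr1R : ((μF i j : ℕ) : ℝ) + ((j:ℕ):ℝ)*(q:ℝ) + 1 ≤ (r:ℝ) - 1 := by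
        have hcc := (Nat.cast_le (α := ℝ)).mpr hr1'
        push_cast at hcc
        linarith
      have hkey : A i j + ((j:ℕ):ℝ) < (((μF i j : ℕ) : ℝ) + ((j:ℕ):ℝ)*(q:ℝ) + 1) * δ := by
        have hexp : (((μF i j : ℕ) : ℝ) + ((j:ℕ):ℝ)*(q:ℝ) + 1) * δ
            = (((μF i j : ℕ) : ℝ) + 1) * δ + ((j:ℕ):ℝ) * ((q:ℝ) * δ) := by ring
        rw [hexp, hqδ, mul_one]
        linarith [(hμ1 i j).2]
      have hmul : (((μF i j : ℕ):ℝ) + ((j:ℕ):ℝ)*(q:ℝ) + 1) * δ ≤ ((r:ℝ) - 1) * δ :=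
        mul_le_mul_of_nonneg_right hr1R hδ0.le
      linarith
    · -- chain condition H at the witness
      intro r hr1 hr2
      unfold tpre
      have hC := CpreN_mono (d := d) (n := Lp + L) (q := q) hq0 i ((μF i j : ℕ) + (j:ℕ)*q + 1) (r-1) (by omega) (by omega)
      have hCR : (CpreN d (Lp + L) q i ((μF i j : ℕ) + (j:ℕ)*q + 1) : ℝ)
          ≤ (CpreN d (Lp + L) q i (r-1) : ℝ) := by exact_mod_cast hC
      have ht : ((((μF i j : ℕ) + (j:ℕ)*q + 1 + 1 : ℕ)):ℝ) - 1 ≤ ((r:ℕ):ℝ) - 1 := by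
        have h1 : ((μF i j : ℕ) + (j:ℕ)*q + 1 + 1 : ℕ) ≤ r := by omega
        have h2 := (Nat.cast_le (α := ℝ)).mpr h1
        linarith
      unfold Cpre
      have hm1 : (((((μF i j : ℕ) + (j:ℕ)*q + 1 + 1 : ℕ)):ℝ) - 1) * δ ≤ ((r:ℝ) - 1) * δ :=
        mul_le_mul_of_nonneg_right ht hδ0.le
      have hm2 : Bc d (Lp + L) * (CpreN d (Lp + L) q i ((μF i j : ℕ) + (j:ℕ)*q + 1) : ℝ)
          ≤ Bc d (Lp + L) * (CpreN d (Lp + L) q i (r-1) : ℝ) :=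
        mul_le_mul_of_nonneg_left hCR hBpos.le
      linarith
    · -- monotone thresholds
      intro r hr1 hr2
      unfold tpre
      have h1 : ((r:ℕ):ℝ) ≤ ((r+1 : ℕ):ℝ) := by exact_mod_cast Nat.le_succ r
      have := mul_le_mul_of_nonneg_right (by linarith : ((r:ℕ):ℝ) - 1 ≤ ((r+1:ℕ):ℝ) - 1) hδ0.le
      linarith
  set Z1 : Fin d → Fin (Lp + L) → ℝ := fun i j => A i j + ((j:ℕ):ℝ)
      + Bc d (Lp + L) * ((Wc d (Lp + L) q * (j:ℕ)
        + ((2*q)^d)^(j:ℕ) * (2*q)^(i:ℕ) * (μF i j : ℕ) : ℕ) : ℝ) with hZ1def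
  have hgsZ1 : composeList gs (addPE A) = Z1 := hgs_eval
  have hSA : saLayer WO WV WK WQ Z1
      = fun i k => Z1 i k + ∑ l : Fin (Lp + L), ∑ i' : Fin d, Z1 i' l := by
    rw [hWO, hWV, hWK, hWQ]
    exact sa_eval hn0 Z1
  have hNat := sum_CpreIdx d (Lp + L) q μF
  have hsum : (∑ l : Fin (Lp + L), ∑ i' : Fin d, Z1 i' l)
      = (∑ l : Fin (Lp + L), ∑ i' : Fin d, (A i' l + ((l:ℕ):ℝ)))
        + Bc d (Lp + L) * ((Wc d (Lp + L) q * (d * csum (Lp + L))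
          + Mval d (Lp + L) q μF : ℕ) : ℝ) := by
    simp only [hZ1def]
    rw [Finset.sum_congr rfl (fun l _ => Finset.sum_add_distrib), Finset.sum_add_distrib]
    congr 1
    rw [Finset.sum_congr rfl (fun l _ => (Finset.mul_sum _ _ _).symm), ← Finset.mul_sum]
    congr 1
    rw [← hNat]
    push_cast
    rfl
  have hwval : ∀ (i : Fin d) (k : Fin (Lp + L)),
      Z1 i k + (∑ l : Fin (Lp + L), ∑ i' : Fin d, Z1 i' l)
      = (A i k + ((k:ℕ):ℝ) + (∑ l : Fin (Lp + L), ∑ i' : Fin d, (A i' l + ((l:ℕ):ℝ))))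
        + Bc d (Lp + L) * ((Eenc d (Lp + L) q i (k, μF) : ℕ) : ℝ) := by
    intro i k
    rw [hsum]
    simp only [hZ1def]
    have hE : (Wc d (Lp + L) q * (k:ℕ) + ((2*q)^d)^(k:ℕ) * (2*q)^(i:ℕ) * (μF i k:ℕ))
        + (Wc d (Lp + L) q * (d * csum (Lp + L)) + Mval d (Lp + L) q μF)
        = Eenc d (Lp + L) q i (k, μF) := by
      unfold Eenc Fval
      ring
    rw [← hE]
    push_cast
    ring
  set SR := ∑ l : Fin (Lp + L), ∑ i' : Fin d, (A i' l + ((l:ℕ):ℝ)) with hSRdef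
  have hSR_eq : SR = (∑ l : Fin (Lp + L), ∑ i' : Fin d, A i' l)
      + (d:ℝ) * ((csum (Lp + L) : ℕ) : ℝ) := by
    rw [hSRdef]
    rw [Finset.sum_congr rfl (fun l _ => Finset.sum_add_distrib), Finset.sum_add_distrib]
    congr 1
    rw [Finset.sum_congr rfl (fun l _ => by
      rw [Finset.sum_const, Finset.card_univ, Fintype.card_fin, nsmul_eq_mul] :
      ∀ l ∈ (Finset.univ : Finset (Fin (Lp + L))),
        (∑ _i' : Fin d, ((l:ℕ):ℝ)) = (d:ℝ) * ((l:ℕ):ℝ))]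
    rw [← Finset.mul_sum]
    congr 1
    unfold csum
    push_cast
    rfl
  have hAsum_nonneg : 0 ≤ ∑ l : Fin (Lp + L), ∑ i' : Fin d, A i' l :=
    Finset.sum_nonneg (fun l _ => Finset.sum_nonneg (fun i' _ => (hA01 i' l).1))
  have hAsum_le : (∑ l : Fin (Lp + L), ∑ i' : Fin d, A i' l) ≤ ((Lp + L : ℕ):ℝ) * d := by
    calc (∑ l : Fin (Lp + L), ∑ i' : Fin d, A i' l)
        ≤ ∑ l : Fin (Lp + L), ∑ i' : Fin d, (1:ℝ) := by
          apply Finset.sum_le_sum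
          intro l _
          apply Finset.sum_le_sum
          intro i' _
          exact le_of_lt (hA01 i' l).2
      _ = ((Lp + L : ℕ):ℝ) * d := by
          simp [Finset.sum_const, Finset.card_univ, Fintype.card_fin]
  have hρlow : ∀ (i : Fin d) (k : Fin (Lp + L)),
      cR d (Lp + L) ≤ A i k + ((k:ℕ):ℝ) + SR := by
    intro i k
    rw [hSR_eq]
    unfold cR
    have h0 := (hA01 i k).1
    have hk : (0:ℝ) ≤ ((k:ℕ):ℝ) := by positivity
    linarith
  have hρhigh : ∀ (i : Fin d) (k : Fin (Lp + L)),
      A i k + ((k:ℕ):ℝ) + SR < cR d (Lp + L) + Bc d (Lp + L) := by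
    intro i k
    rw [hSR_eq]
    unfold cR Bc
    have h1 := (hA01 i k).2
    have hk : ((k:ℕ):ℝ) + 1 ≤ ((Lp + L : ℕ):ℝ) := by exact_mod_cast k.isLt
    have h2 := hAsum_le
    linarith
  have hgb : ∀ (i : Fin d) (e' : ℕ),
      0 ≤ gstar d (Lp + L) q δ h i e' ∧ gstar d (Lp + L) q δ h i e' ≤ 1 := by
    intro i e'
    unfold gstar
    split
    · next hx =>
      have hcube : (fun a b => ((hx.choose.2 a b : Fin q) : ℝ) * δ) ∈ cube d (Lp + L) := by
        simp only [cube, Set.mem_setOf_eq, Set.mem_Icc]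
        intro a b
        refine ⟨mul_nonneg (by positivity) hδ0.le, ?_⟩
        have hc : ((hx.choose.2 a b : ℕ):ℝ) + 1 ≤ (q:ℝ) := by
          exact_mod_cast (hx.choose.2 a b).isLt
        have hmm := mul_le_mul_of_nonneg_right
          (by linarith : ((hx.choose.2 a b : ℕ):ℝ) ≤ (q:ℝ) - 1) hδ0.le
        have hqd : ((q:ℝ) - 1) * δ = 1 - δ := by rw [sub_mul, hqδ, one_mul]
        linarith
      obtain ⟨m, hm1, hm2⟩ := hgrid _ hcube i hx.choose.1
      rw [hm1]
      exact ⟨mul_nonneg (by positivity) hδ0.le, by linarith⟩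
    · exact ⟨le_rfl, zero_le_one⟩
  have hpost : ∀ (i : Fin d) (k : Fin (Lp + L)),
      composeList fs (saLayer WO WV WK WQ (composeList gs (addPE A))) i k
      = gstar d (Lp + L) q δ h i (Eenc d (Lp + L) q i (k, μF)) := by
    intro i k
    have hw := hwval i k
    have heK : Eenc d (Lp + L) q i (k, μF) ≤ Kcap d (Lp + L) q := Eenc_le_Kcap hq0 i (k, μF)
    set e := Eenc d (Lp + L) q i (k, μF) with hedef
    set ρ := A i k + ((k:ℕ):ℝ) + SR with hρdef
    have hρ1 := hρlow i k
    have hρ2 := hρhigh i k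
    have h12 : chainStep (t12 d (Lp + L)) (C12 d (Lp + L)) KK (ρ + Bc d (Lp + L) * (e:ℝ))
        = ρ + Gc d (Lp + L) * 2^(e+1) := by
      rw [chain_eval (t12 d (Lp + L)) (C12 d (Lp + L)) (by simp [C12]) KK _ (e+1)
        (by omega) (Or.inr ?_) ?_ ?_ ?_]
      · rw [C12, if_neg (Nat.succ_ne_zero e)]
        push_cast
        ring
      · -- witness lower bound
        unfold t12
        push_cast
        nlinarith [hρ1, hBpos.le]
      · -- below later thresholds
        intro r hr1 hr2
        unfold t12
        have hcr : ((e:ℝ) + 2) ≤ (r:ℝ) := by exact_mod_cast hr1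
        have hmul := mul_le_mul_of_nonneg_left hcr hBpos.le
        nlinarith [hρ2]
      · -- chain condition
        intro r hr1 hr2
        unfold t12
        rw [C12, C12, if_neg (Nat.succ_ne_zero e), if_neg (by omega : ¬(r - 1 = 0))]
        have hp : (2:ℝ)^(e+1) ≤ 2^(r-1) := by
          apply pow_le_pow_right₀ (by norm_num : (1:ℝ) ≤ 2)
          omega
        have hc1 : ((r - 1 : ℕ):ℝ) = (r:ℝ) - 1 := by
          rw [Nat.cast_sub (by omega)]
          norm_num
        have hkey := mul_le_mul_of_nonneg_left hp hGpos.le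
        push_cast [hc1]
        nlinarith [hkey]
      · -- monotone
        intro r hr1 hr2
        unfold t12
        have hcr : ((r:ℕ):ℝ) ≤ ((r+1:ℕ):ℝ) := by exact_mod_cast Nat.le_succ r
        have := mul_le_mul_of_nonneg_left hcr hBpos.le
        push_cast at this ⊢
        nlinarith [hBpos.le]
    have hsep1 : ∀ ν', 1 ≤ ν' → ν' < e+1 →
        a3 d (Lp + L) ν' + 2*Bc d (Lp + L) ≤ a3 d (Lp + L) (e+1) := by
      intro ν' h1 h2
      unfold a3 Gc
      have hp : (2:ℝ)^(ν'+1) ≤ 2^(e+1) := pow_le_pow_right₀ (by norm_num : (1:ℝ) ≤ 2) (by omega)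
      rw [pow_succ] at hp
      have h1p : (1:ℝ) ≤ (2:ℝ)^ν' := by
        simpa using pow_le_pow_right₀ (by norm_num : (1:ℝ) ≤ 2) (Nat.zero_le ν')
      nlinarith [hBpos]
    have hsep2 : ∀ ν', e+1 < ν' →
        a3 d (Lp + L) (e+1) + Bc d (Lp + L) ≤ a3 d (Lp + L) ν' := by
      intro ν' h2
      unfold a3 Gc
      have hp : (2:ℝ)^(e+1+1) ≤ 2^ν' := pow_le_pow_right₀ (by norm_num : (1:ℝ) ≤ 2) (by omega)
      rw [pow_succ] at hp
      have h1p : (1:ℝ) ≤ (2:ℝ)^(e+1) := by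
        simpa using pow_le_pow_right₀ (by norm_num : (1:ℝ) ≤ 2) (Nat.zero_le (e+1))
      nlinarith [hBpos]
    have h3 : pairChain (a3 d (Lp + L)) (Bc d (Lp + L)) KK (ρ + Gc d (Lp + L) * 2^(e+1))
        = a3 d (Lp + L) (e+1) := by
      rw [pairChain_eval (a3 d (Lp + L)) (Bc d (Lp + L)) hBpos (e+1) (by omega)
        hsep1 hsep2 KK _ (by unfold a3; linarith [hρ1]) (by unfold a3; linarith [hρ2]),
        if_pos (by omega : e+1 ≤ KK)]
    have h4 : chainStep (a3 d (Lp + L)) (C4 d (Lp + L) q δ h i) KK (a3 d (Lp + L) (e+1))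
        = gstar d (Lp + L) q δ h i e := by
      rw [chain_eval (a3 d (Lp + L)) (C4 d (Lp + L) q δ h i) (by simp [C4]) KK _ (e+1)
        (by omega) (Or.inr le_rfl) ?_ ?_ ?_]
      · rw [C4, if_neg (Nat.succ_ne_zero e), Nat.add_sub_cancel]
        unfold a3
        ring
      · -- strictly below later thresholds
        intro r hr1 hr2
        unfold a3
        have hp : (2:ℝ)^(e+1) < 2^r := by
          apply pow_lt_pow_right₀ (by norm_num : (1:ℝ) < 2)
          omega
        nlinarith [hGpos]
      · -- chain condition
        intro r hr1 hr2
        rw [C4, C4, if_neg (Nat.succ_ne_zero e), if_neg (by omega : ¬(r - 1 = 0)),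
          Nat.add_sub_cancel]
        unfold a3
        have hpr : (2:ℝ)^r = 2^(r-1) * 2 := by
          rw [← pow_succ]
          congr 1
          omega
        have he2 : (2:ℝ)^(e+1+1) = 2^(e+1) * 2 := by ring
        rw [he2, hpr]
        rcases Nat.eq_or_lt_of_le hr1 with heq | hlt
        · -- r = e + 2
          have hre : r - 1 = e + 1 := by omega
          rw [hre, Nat.add_sub_cancel]
        · -- r ≥ e + 3
          have hp2 : (2:ℝ)^(e+1+1) ≤ 2^(r-1) :=
            pow_le_pow_right₀ (by norm_num : (1:ℝ) ≤ 2) (by omega)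
          rw [he2] at hp2
          have h1p : (1:ℝ) ≤ (2:ℝ)^(e+1) := by
            simpa using pow_le_pow_right₀ (by norm_num : (1:ℝ) ≤ 2) (Nat.zero_le (e+1))
          have hge := (hgb i e).2
          have hge2 := (hgb i (r-1-1)).1
          nlinarith [hGpos, hG1]
      · -- monotone
        intro r hr1 hr2
        unfold a3
        have hp : (2:ℝ)^r ≤ 2^(r+1) :=
          pow_le_pow_right₀ (by norm_num : (1:ℝ) ≤ 2) (Nat.le_succ r)
        nlinarith [hGpos.le]
    simp only [hgsZ1, hSA, hfsc]
    rw [hw, h12, h3, h4]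
  -- identify `gstar` with `h`
  have hfloor : ∀ (i : Fin d) (j : Fin (Lp + L)),
      ⌊A i j / δ⌋ = ⌊(((μF i j : ℕ):ℝ) * δ) / δ⌋ := by
    intro i j
    have hδne : δ ≠ 0 := ne_of_gt hδ0
    rw [mul_div_assoc, div_self hδne, mul_one, Int.floor_natCast]
    have hdiv : A i j / δ = A i j * q := by
      rw [div_eq_iff hδne, mul_assoc, mul_comm (q:ℝ) δ]
      rw [mul_comm δ (q:ℝ), hqδ, mul_one]
    rw [hdiv]
    exact_mod_cast (hμcast i j).symm
  have hAcube : A ∈ cube d (Lp + L) := by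
    simp only [cube, Set.mem_setOf_eq, Set.mem_Icc]
    intro i j
    exact ⟨(hA01 i j).1, le_of_lt (hA01 i j).2⟩
  have hGcube : (fun a b => ((μF a b : Fin q) : ℝ) * δ) ∈ cube d (Lp + L) := by
    simp only [cube, Set.mem_setOf_eq, Set.mem_Icc]
    intro a b
    refine ⟨mul_nonneg (by positivity) hδ0.le, ?_⟩
    have hc : ((μF a b : ℕ):ℝ) + 1 ≤ (q:ℝ) := by exact_mod_cast (μF a b).isLt
    have hmm := mul_le_mul_of_nonneg_right
      (by linarith : ((μF a b : ℕ):ℝ) ≤ (q:ℝ) - 1) hδ0.le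
    have hqd : ((q:ℝ) - 1) * δ = 1 - δ := by rw [sub_mul, hqδ, one_mul]
    linarith
  have hheq : h A = h (fun a b => ((μF a b : Fin q) : ℝ) * δ) := hcell A hAcube _ hGcube hfloor
  funext i j
  show composeList fs (saLayer WO WV WK WQ (composeList gs (addPE A))) i
      ⟨Lp + (j:ℕ), by have := j.isLt; omega⟩
    = h A i ⟨Lp + (j:ℕ), by have := j.isLt; omega⟩
  rw [hpost, gstar_eval hq0 δ h i, ← hheq]
end

section
/- Let 1 ≤ α < ∞, ε > 0, C > 0 and integers d, L ≥ 1. For every C-Lipschitz function f: [0,1]^{d×L} → [0,1]^{d×L} there exists a transformer τ ∈ 𝒯_A^{1,1,4} on sequences of length L (a composition of finitely many width-4 feed-forward layers, one single-head hidden-size-1 self-attention layer with residual connection whose weight matrices may have any rank, and finitely many width-4 feed-forward layers, applied after adding the positional encoding E with E_{i,j} = j−1) such that d_α(τ, f) ≤ ε, where d_α(τ, f) = (∫_{[0,1]^{d×L}} ‖τ(X) − f(X)‖_α^α dX)^{1/α}. -/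
open MeasureTheory

/-- The entrywise `ℓ_α` norm of a `d × m` array: `(∑_{i,j} |M_{ij}|^α)^{1/α}`. -/
noncomputable def anorm {d m : ℕ} (α : ℝ) (M : Fin d → Fin m → ℝ) : ℝ :=
  (∑ i, ∑ j, |M i j| ^ α) ^ (1 / α)

namespace TU

open Finset

/-! ### Activations -/

noncomputable def rampf (x : ℝ) : ℝ := min (max x 0) 1
noncomputable def clipf (x : ℝ) : ℝ := rampf x - x

lemma rampf_nonpos {x : ℝ} (h : x ≤ 0) : rampf x = 0 := by
  simp [rampf, max_eq_right h]
lemma rampf_mem {x : ℝ} (h0 : 0 ≤ x) (h1 : x ≤ 1) : rampf x = x := by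
  simp [rampf, max_eq_left h0, min_eq_left h1]
lemma rampf_ge {x : ℝ} (h : 1 ≤ x) : rampf x = 1 := by
  have h2 : max x 0 = x := max_eq_left (le_trans zero_le_one h)
  simp [rampf, h2, min_eq_right h]
lemma rampf_nonneg (x : ℝ) : 0 ≤ rampf x := le_min (le_max_right x 0) zero_le_one
lemma rampf_le_one (x : ℝ) : rampf x ≤ 1 := min_le_right _ _

lemma PL3_rampf : PL3 rampf := by
  refine ⟨0, 1, 0, 0, 1, 0, 0, 1, zero_le_one, Or.inl rfl, ?_, ?_, ?_⟩
  · intro x hx; rw [rampf_nonpos hx.le]; ring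
  · intro x h0 h1; rw [rampf_mem h0 h1.le]; ring
  · intro x hx; rw [rampf_ge hx]; ring

lemma PL3_clipf : PL3 clipf := by
  refine ⟨0, 1, -1, 0, 0, 0, -1, 1, zero_le_one, Or.inr (Or.inl rfl), ?_, ?_, ?_⟩
  · intro x hx; rw [clipf, rampf_nonpos hx.le]; ring
  · intro x h0 h1; rw [clipf, rampf_mem h0 h1.le]; ring
  · intro x hx; rw [clipf, rampf_ge hx]; ring

/-! ### Generic single-output feed-forward layers -/

def dot {d : ℕ} (w v : Fin d → ℝ) : ℝ := ∑ i, w i * v i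

noncomputable def Gfun (φ : ℝ → ℝ) (c s b : Fin 4 → ℝ) (x : ℝ) : ℝ :=
  ∑ j, c j * φ (s j * x + b j)

/-- Columnwise layer: adds `Gfun φ c s b (dot w v)` to coordinate `i₀`. -/
noncomputable def layerCol {d : ℕ} (φ : ℝ → ℝ) (i₀ : Fin d) (w : Fin d → ℝ)
    (c s b : Fin 4 → ℝ) (v : Fin d → ℝ) : Fin d → ℝ :=
  fun i => v i + if i = i₀ then Gfun φ c s b (dot w v) else 0

/-- Lift a columnwise map to a matrix map. -/
def lift {d n : ℕ} (g : (Fin d → ℝ) → Fin d → ℝ)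
    (Z : Fin d → Fin n → ℝ) : Fin d → Fin n → ℝ :=
  fun i k => g (column Z k) i

lemma composeList_nil {β : Type*} : composeList ([] : List (β → β)) = id := rfl

lemma composeList_cons {β : Type*} (f : β → β) (l : List (β → β)) :
    composeList (f :: l) = f ∘ composeList l := rfl

lemma composeList_append {β : Type*} (l₁ l₂ : List (β → β)) :
    composeList (l₁ ++ l₂) = composeList l₁ ∘ composeList l₂ := by
  induction l₁ with
  | nil => rfl
  | cons a t ih => simp [composeList_cons, ih, Function.comp_assoc]

lemma lift_comp {d n : ℕ} (g h : (Fin d → ℝ) → Fin d → ℝ) :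
    (lift (d := d) (n := n) g) ∘ (lift h) = lift (g ∘ h) := by
  funext Z i k
  rfl

lemma composeList_map_lift {d n : ℕ} (gs : List ((Fin d → ℝ) → Fin d → ℝ)) :
    composeList (gs.map (lift (d := d) (n := n))) = lift (composeList gs) := by
  induction gs with
  | nil => funext Z i k; simp [composeList, lift, column]
  | cons a t ih => simp [composeList_cons, ih, lift_comp]

lemma isFF4_layer {d n : ℕ} {φ : ℝ → ℝ} (hφ : PL3 φ) (i₀ : Fin d) (w : Fin d → ℝ)
    (c s b : Fin 4 → ℝ) : IsFF4 (lift (d := d) (n := n) (layerCol φ i₀ w c s b)) := by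
  refine ⟨φ, fun j i' => s j * w i', fun i j => if i = i₀ then c j else 0, b, 0, hφ, ?_⟩
  funext Z i k
  simp only [lift, layerCol, ffLayer, mvec, column, Gfun, dot, Pi.zero_apply, add_zero]
  congr 1
  by_cases h : i = i₀
  · simp only [h, if_true]
    refine Finset.sum_congr rfl (fun j _ => ?_)
    congr 2
    rw [Finset.mul_sum]
    congr 1
    exact Finset.sum_congr rfl (fun i' _ => by ring)
  · simp [h]

/-- Generic "fire once" induction over a nodup list of layers. -/
lemma fireOnce {ι V : Type*} [DecidableEq ι] (F : ι → V → V) (ss : List ι)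
    (hnd : ss.Nodup) (j₀ : ι) (v₀ w : V)
    (h1 : F j₀ v₀ = w) (h2 : ∀ j ∈ ss, j ≠ j₀ → F j v₀ = v₀)
    (h3 : ∀ j ∈ ss, j ≠ j₀ → F j w = w) :
    composeList (ss.map F) v₀ = if j₀ ∈ ss then w else v₀ := by
  induction ss with
  | nil => simp [composeList]
  | cons a t ih =>
    have hnd' := (List.nodup_cons.mp hnd)
    have ihv := ih hnd'.2 (fun j hj => h2 j (List.mem_cons_of_mem a hj))
      (fun j hj => h3 j (List.mem_cons_of_mem a hj))
    rw [List.map_cons, composeList_cons]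
    simp only [Function.comp_apply, ihv]
    by_cases haj : a = j₀
    · subst haj
      have hmem : a ∉ t := hnd'.1
      simp [hmem, h1]
    · by_cases hmem : j₀ ∈ t
      · rw [if_pos hmem, if_pos (List.mem_cons.mpr (Or.inr hmem)),
          h3 a List.mem_cons_self haj]
      · rw [if_neg hmem, h2 a List.mem_cons_self haj,
          if_neg (by simp [List.mem_cons, haj, hmem, Ne.symm])]

/-- No layer fires. -/
lemma fireNone {ι V : Type*} (F : ι → V → V) (ss : List ι) (v₀ : V)
    (h : ∀ j, F j v₀ = v₀) : composeList (ss.map F) v₀ = v₀ := by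
  induction ss with
  | nil => rfl
  | cons a t ih => rw [List.map_cons, composeList_cons]; simp [ih, h]


/-! ### Natural number digit arithmetic -/

lemma digits_unique {B : ℕ} : ∀ {n : ℕ} (a b : Fin n → ℕ),
    (∀ i, a i < B) → (∀ i, b i < B) →
    (∑ i, a i * B ^ (i : ℕ)) = (∑ i, b i * B ^ (i : ℕ)) → a = b := by
  intro n
  induction n with
  | zero => intro a b _ _ _; funext i; exact absurd i.2 (Nat.not_lt_zero _)
  | succ m ih =>
    intro a b ha hb h
    have hB : 0 < B := lt_of_le_of_lt (Nat.zero_le _) (ha 0)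
    have expand : ∀ (c : Fin (m+1) → ℕ),
        (∑ i, c i * B ^ (i : ℕ)) = c 0 + (∑ i : Fin m, c i.succ * B ^ (i : ℕ)) * B := by
      intro c
      rw [Fin.sum_univ_succ, Finset.sum_mul]
      simp [pow_succ]
      ring_nf
      congr 1
      exact funext (fun i => by ring)
    rw [expand a, expand b] at h
    have h0 : a 0 = b 0 := by
      have := congrArg (· % B) h
      simpa [Nat.add_mul_mod_self_right, Nat.mod_eq_of_lt (ha 0), Nat.mod_eq_of_lt (hb 0)]
        using this
    have htail : (∑ i : Fin m, a i.succ * B ^ (i : ℕ)) = ∑ i : Fin m, b i.succ * B ^ (i : ℕ) := by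
      have h' : (∑ i : Fin m, a i.succ * B ^ (i : ℕ)) * B
          = (∑ i : Fin m, b i.succ * B ^ (i : ℕ)) * B := by omega
      exact Nat.eq_of_mul_eq_mul_right hB h'
    have := ih (fun i => a i.succ) (fun i => b i.succ) (fun i => ha i.succ) (fun i => hb i.succ) htail
    funext i
    refine Fin.cases h0 (fun j => ?_) i
    exact congrFun this j

lemma sum_lt_pow {B : ℕ} (hB : 0 < B) : ∀ {n : ℕ} (a : Fin n → ℕ),
    (∀ i, a i < B) → (∑ i, a i * B ^ (i : ℕ)) < B ^ n := by
  intro n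
  induction n with
  | zero => intro a _; simp
  | succ m ih =>
    intro a ha
    have expand : (∑ i, a i * B ^ (i : ℕ))
        = a 0 + (∑ i : Fin m, a i.succ * B ^ (i : ℕ)) * B := by
      rw [Fin.sum_univ_succ, Finset.sum_mul]
      simp [pow_succ]
      ring_nf
      congr 1
      exact funext (fun i => by ring)
    rw [expand]
    have h1 : (∑ i : Fin m, a i.succ * B ^ (i : ℕ)) ≤ B ^ m - 1 :=
      Nat.le_sub_one_of_lt (ih _ (fun i => ha i.succ))
    have h2 : a 0 ≤ B - 1 := Nat.le_sub_one_of_lt (ha 0)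
    have hBm : 1 ≤ B ^ m := Nat.one_le_pow _ _ hB
    calc a 0 + (∑ i : Fin m, a i.succ * B ^ (i : ℕ)) * B
        ≤ (B - 1) + (B ^ m - 1) * B := by
          exact Nat.add_le_add h2 (Nat.mul_le_mul_right _ h1)
      _ < B ^ (m+1) := by
          rw [Nat.sub_mul, pow_succ]
          have : B ≤ B ^ m * B := Nat.le_mul_of_pos_left _ hBm
          omega

lemma mul_add_digit_inj {N k q k' q' : ℕ} (hN : 0 < N) (hq : q < N) (hq' : q' < N)
    (h : k * N + q = k' * N + q') : k = k' ∧ q = q' := by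
  have hk : k = k' := by
    have e1 : (k * N + q) / N = k := by
      rw [Nat.mul_comm, Nat.mul_add_div hN, Nat.div_eq_of_lt hq, Nat.add_zero]
    have e2 : (k' * N + q') / N = k' := by
      rw [Nat.mul_comm, Nat.mul_add_div hN, Nat.div_eq_of_lt hq', Nat.add_zero]
    rw [← e1, ← e2, h]
  exact ⟨hk, by subst hk; omega⟩

/-! ### The specific codes -/

def Snat (L N : ℕ) (k : Fin (L+1)) (q : Fin N) : ℕ := L + 2 + ((k : ℕ) * N + (q : ℕ))
def Kb (L N : ℕ) : ℕ := N * (L+1) + L + 2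
def tnat (d L N : ℕ) (k : Fin (L+1)) (q : Fin (d+1) → Fin N) : ℕ :=
  ∑ i, Snat L N k (q i) * (Kb L N) ^ (i : ℕ)
def codeN (d N : ℕ) (q : Fin (d+1) → Fin N) : ℕ := ∑ i, (q i : ℕ) * N ^ (i : ℕ)
def Mb (d N : ℕ) : ℕ := N ^ (d+1)
def gb (d N : ℕ) : ℕ := 2 * Mb d N + 1
def OFF (d L N : ℕ) : ℕ := (Kb L N) ^ (d+1)
def Vnat (d L N : ℕ) (l : Fin (L+1)) (q : Fin (d+1) → Fin N) : ℕ :=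
  OFF d L N + codeN d N q * (gb d N) ^ (2*(l:ℕ)+1) + (gb d N) ^ (2*(l:ℕ)+2)
def Wnat (d L N : ℕ) (k : Fin (L+1)) (Q : Fin (L+1) → Fin (d+1) → Fin N) : ℕ :=
  Vnat d L N k (Q k) + ∑ l, Vnat d L N l (Q l)

section Codes

variable {d L N : ℕ} (hN : 0 < N)

lemma Snat_lt (k : Fin (L+1)) (q : Fin N) : Snat L N k q < Kb L N := by
  have h1 : (k : ℕ) ≤ L := Nat.lt_succ_iff.mp k.2
  have h2 : (q : ℕ) < N := q.2
  have : (k : ℕ) * N + (q : ℕ) < N * (L + 1) := by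
    calc (k : ℕ) * N + (q : ℕ) < (k : ℕ) * N + N := by omega
      _ = ((k : ℕ) + 1) * N := by ring
      _ ≤ (L + 1) * N := Nat.mul_le_mul_right _ (by omega)
      _ = N * (L + 1) := Nat.mul_comm _ _
  unfold Snat Kb
  omega

lemma Kb_pos : 0 < Kb L N := by unfold Kb; omega

lemma tnat_lt_OFF (k : Fin (L+1)) (q : Fin (d+1) → Fin N) : tnat d L N k q < OFF d L N :=
  sum_lt_pow Kb_pos _ (fun i => Snat_lt _ _)

lemma tnat_inj {k k' : Fin (L+1)} {q q' : Fin (d+1) → Fin N}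
    (h : tnat d L N k q = tnat d L N k' q') : k = k' ∧ q = q' := by
  have hd := digits_unique (B := Kb L N) (fun i => Snat L N k (q i))
    (fun i => Snat L N k' (q' i)) (fun i => Snat_lt _ _) (fun i => Snat_lt _ _) h
  have hN' : 0 < N := lt_of_le_of_lt (Nat.zero_le _) (q 0).2
  have key : ∀ i, (k : ℕ) = k' ∧ (q i : ℕ) = q' i := by
    intro i
    have := congrFun hd i
    unfold Snat at this
    have h' : (k : ℕ) * N + (q i : ℕ) = (k' : ℕ) * N + (q' i : ℕ) := by omega
    exact mul_add_digit_inj hN' (q i).2 (q' i).2 h'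
  refine ⟨Fin.ext (key 0).1, funext (fun i => Fin.ext (key i).2)⟩

lemma codeN_lt (q : Fin (d+1) → Fin N) : codeN d N q < Mb d N := by
  have hN' : 0 < N := lt_of_le_of_lt (Nat.zero_le _) (q 0).2
  exact sum_lt_pow hN' _ (fun i => (q i).2)

lemma codeN_inj {q q' : Fin (d+1) → Fin N} (h : codeN d N q = codeN d N q') : q = q' := by
  have hd := digits_unique (B := N) (fun i => (q i : ℕ)) (fun i => (q' i : ℕ))
    (fun i => (q i).2) (fun i => (q' i).2) h
  exact funext (fun i => Fin.ext (congrFun hd i))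

lemma gb_ge_three : 3 ≤ gb d N ∨ N = 0 := by
  rcases Nat.eq_zero_or_pos N with h0 | h0
  · exact Or.inr h0
  · left; unfold gb Mb
    have : 1 ≤ N ^ (d+1) := Nat.one_le_pow _ _ h0
    omega

def aDig (d L N : ℕ) (k : Fin (L+1)) (Q : Fin (L+1) → Fin (d+1) → Fin N) (l : Fin (L+1)) : ℕ :=
  (codeN d N (Q l) + if l = k then codeN d N (Q k) else 0)
    + (1 + if l = k then 1 else 0) * gb d N

lemma aDig_lt (hN : 0 < N) (k : Fin (L+1)) (Q : Fin (L+1) → Fin (d+1) → Fin N) (l : Fin (L+1)) :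
    aDig d L N k Q l < (gb d N) ^ 2 := by
  have hg : 3 ≤ gb d N := by
    rcases gb_ge_three (d := d) (N := N) with h | h
    · exact h
    · omega
  have hc1 := codeN_lt (d := d) (N := N) (Q l)
  have hc2 := codeN_lt (d := d) (N := N) (Q k)
  have hgM : gb d N = 2 * Mb d N + 1 := rfl
  have : aDig d L N k Q l < 3 * gb d N := by
    unfold aDig
    split <;> omega
  calc aDig d L N k Q l < 3 * gb d N := this
    _ ≤ gb d N * gb d N := Nat.mul_le_mul_right _ hg
    _ = (gb d N) ^ 2 := (sq (gb d N)).symm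

lemma Wnat_eq (k : Fin (L+1)) (Q : Fin (L+1) → Fin (d+1) → Fin N) :
    Wnat d L N k Q = (L+2) * OFF d L N
      + gb d N * ∑ l, aDig d L N k Q l * ((gb d N) ^ 2) ^ (l : ℕ) := by
  have pointwise : ∀ l : Fin (L+1),
      gb d N * (aDig d L N k Q l * ((gb d N) ^ 2) ^ (l : ℕ))
      = (codeN d N (Q l) * gb d N ^ (2*(l:ℕ)+1) + gb d N ^ (2*(l:ℕ)+2))
        + (if l = k then codeN d N (Q k) * gb d N ^ (2*(l:ℕ)+1) + gb d N ^ (2*(l:ℕ)+2)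
           else 0) := by
    intro l
    have hpow : ((gb d N) ^ 2) ^ (l : ℕ) = gb d N ^ (2*(l:ℕ)) := by rw [← pow_mul]
    unfold aDig
    rw [hpow]
    split <;> ring
  rw [Finset.mul_sum, Finset.sum_congr rfl (fun l _ => pointwise l), Finset.sum_add_distrib,
    Finset.sum_ite_eq' Finset.univ k, Finset.sum_add_distrib]
  simp only [Finset.mem_univ, if_true]
  unfold Wnat Vnat
  rw [Finset.sum_add_distrib, Finset.sum_add_distrib, Finset.sum_const, Finset.card_univ,
    Fintype.card_fin]
  simp only [smul_eq_mul]
  unfold OFF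
  ring

end Codes

section Codes2

variable {d L N : ℕ}

lemma OFF_ge_two (hL : True) : 2 ≤ OFF d L N := by
  have h1 : 2 ≤ Kb L N := by unfold Kb; omega
  calc 2 ≤ Kb L N := h1
    _ ≤ (Kb L N) ^ (d+1) := Nat.le_self_pow (Nat.succ_ne_zero d) _

lemma Vnat_ge_OFF (l : Fin (L+1)) (q : Fin (d+1) → Fin N) : OFF d L N ≤ Vnat d L N l q := by
  unfold Vnat; omega

lemma Wnat_ge_two (k : Fin (L+1)) (Q : Fin (L+1) → Fin (d+1) → Fin N) :
    2 ≤ Wnat d L N k Q := by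
  have h1 := Vnat_ge_OFF (d := d) (L := L) (N := N) k (Q k)
  have h2 := OFF_ge_two (d := d) (L := L) (N := N) trivial
  unfold Wnat
  omega

lemma Wnat_inj {k k' : Fin (L+1)} {Q Q' : Fin (L+1) → Fin (d+1) → Fin N}
    (h : Wnat d L N k Q = Wnat d L N k' Q') : k = k' ∧ Q = Q' := by
  have hN' : 0 < N := lt_of_le_of_lt (Nat.zero_le _) ((Q 0 0).2)
  have hg : 0 < gb d N := by unfold gb; omega
  rw [Wnat_eq, Wnat_eq] at h
  have hsum : (∑ l, aDig d L N k Q l * ((gb d N)^2)^(l:ℕ))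
      = ∑ l, aDig d L N k' Q' l * ((gb d N)^2)^(l:ℕ) :=
    Nat.eq_of_mul_eq_mul_left hg (by omega)
  have hdig := digits_unique (B := (gb d N)^2) _ _ (fun l => aDig_lt hN' k Q l)
    (fun l => aDig_lt hN' k' Q' l) hsum
  have hgM : gb d N = 2 * Mb d N + 1 := rfl
  have hkk : k = k' := by
    by_contra hne
    have h1 := congrFun hdig k
    have hQ'k := codeN_lt (d := d) (N := N) (Q' k)
    have e1 : aDig d L N k Q k = 2 * codeN d N (Q k) + 2 * gb d N := by
      unfold aDig; rw [if_pos rfl, if_pos rfl]; ring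
    have e2 : aDig d L N k' Q' k = codeN d N (Q' k) + gb d N := by
      unfold aDig; rw [if_neg hne, if_neg hne]; ring
    rw [e1, e2] at h1
    omega
  subst hkk
  refine ⟨rfl, funext (fun l => ?_)⟩
  have h2 := congrFun hdig l
  by_cases hlk : l = k
  · subst hlk
    have e1 : aDig d L N l Q l = 2 * codeN d N (Q l) + 2 * gb d N := by
      unfold aDig; rw [if_pos rfl, if_pos rfl]; ring
    have e2 : aDig d L N l Q' l = 2 * codeN d N (Q' l) + 2 * gb d N := by
      unfold aDig; rw [if_pos rfl, if_pos rfl]; ring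
    rw [e1, e2] at h2
    exact codeN_inj (by omega)
  · have e1 : aDig d L N k Q l = codeN d N (Q l) + gb d N := by
      unfold aDig; rw [if_neg hlk, if_neg hlk]; ring
    have e2 : aDig d L N k Q' l = codeN d N (Q' l) + gb d N := by
      unfold aDig; rw [if_neg hlk, if_neg hlk]; ring
    rw [e1, e2] at h2
    exact codeN_inj (by omega)

end Codes2

/-! ### Concrete layers -/

def eb {d : ℕ} (i : Fin d) : Fin d → ℝ := fun i' => if i' = i then 1 else 0

lemma dot_eb {d : ℕ} (i : Fin d) (v : Fin d → ℝ) : dot (eb i) v = v i := by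
  unfold dot eb
  rw [Finset.sum_congr rfl (fun i' _ => by rw [ite_mul, one_mul, zero_mul])]
  rw [Finset.sum_ite_eq' Finset.univ i v]
  simp

noncomputable def quantL (L N : ℕ) (η : ℝ) {d : ℕ} (i : Fin (d+1)) (m : ℕ) :
    (Fin (d+1) → ℝ) → Fin (d+1) → ℝ :=
  let a : ℝ := m * (N:ℝ)⁻¹
  let bb : ℝ := (m+1) * (N:ℝ)⁻¹
  let c₀ : ℝ := (L : ℝ) + 2 + m
  layerCol rampf i (eb i)
    ![c₀ - a - η, -(bb - a - 2*η), -(c₀ - bb + η), 0]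
    ![1/η, 1/(bb - a - 2*η), 1/η, 0]
    ![-(a/η), -((a+η)/(bb-a-2*η)), -((bb-η)/η), 0]

noncomputable def bumpL {d : ℕ} (i₀ : Fin d) (w : Fin d → ℝ) (t c₀ : ℝ) :
    (Fin d → ℝ) → Fin d → ℝ :=
  layerCol rampf i₀ w ![c₀, -c₀, 0, 0] ![1, 1, 0, 0] ![1 - t, -t, 0, 0]

noncomputable def clipL {d : ℕ} (i₀ : Fin d) : (Fin d → ℝ) → Fin d → ℝ :=
  layerCol clipf i₀ (eb i₀) ![1, 0, 0, 0] ![1, 0, 0, 0] ![0, 0, 0, 0]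

lemma bumpL_eval {d : ℕ} (i₀ : Fin d) (w : Fin d → ℝ) (t c₀ : ℝ) (v : Fin d → ℝ) :
    bumpL i₀ w t c₀ v = fun i => v i +
      if i = i₀ then c₀ * rampf (dot w v - t + 1) - c₀ * rampf (dot w v - t) else 0 := by
  funext i
  unfold bumpL layerCol
  by_cases h : i = i₀
  · simp only [h, if_true]
    congr 1
    unfold Gfun
    rw [Fin.sum_univ_four]
    norm_num [Matrix.cons_val_zero, Matrix.cons_val_one, Matrix.head_cons, Matrix.cons_val_three, Matrix.cons_val_two, Matrix.tail_cons]
    ring_nf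
  · simp [h]

lemma bumpL_fire {d : ℕ} (i₀ : Fin d) (w : Fin d → ℝ) (t c₀ : ℝ) (v : Fin d → ℝ)
    (h : dot w v = t) :
    bumpL i₀ w t c₀ v = fun i => if i = i₀ then v i + c₀ else v i := by
  rw [bumpL_eval]
  funext i
  by_cases hi : i = i₀
  · simp only [hi, if_true]
    rw [h]
    have e1 : rampf (t - t + 1) = 1 := rampf_ge (by norm_num)
    have e2 : rampf (t - t) = 0 := rampf_nonpos (by norm_num)
    rw [e1, e2]
    ring
  · simp [hi]

lemma bumpL_skip {d : ℕ} (i₀ : Fin d) (w : Fin d → ℝ) (t c₀ : ℝ) (v : Fin d → ℝ)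
    (h : dot w v ≤ t - 1 ∨ t + 1 ≤ dot w v) : bumpL i₀ w t c₀ v = v := by
  rw [bumpL_eval]
  funext i
  by_cases hi : i = i₀
  · simp only [hi, if_true]
    rcases h with h | h
    · rw [rampf_nonpos (by linarith), rampf_nonpos (by linarith)]
      ring
    · rw [rampf_ge (by linarith), rampf_ge (by linarith)]
      ring
  · simp [hi]

lemma clipL_eval {d : ℕ} (i₀ : Fin d) (v : Fin d → ℝ) :
    clipL i₀ v = fun i => if i = i₀ then rampf (v i) else v i := by
  funext i
  unfold clipL layerCol
  by_cases h : i = i₀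
  · simp only [h, if_true]
    unfold Gfun
    rw [Fin.sum_univ_four, dot_eb]
    norm_num [Matrix.cons_val_zero, Matrix.cons_val_one, Matrix.head_cons, Matrix.cons_val_three, Matrix.cons_val_two, Matrix.tail_cons]
    unfold clipf
    ring
  · simp [h]

lemma quantL_eval {d L N : ℕ} (η : ℝ) (i : Fin (d+1)) (m : ℕ) (v : Fin (d+1) → ℝ)
    (hη : 0 < η) (hN : 0 < N) (hsep : 2 * η < (N:ℝ)⁻¹) :
    quantL L N η i m v = fun i' => v i' +
      if i' = i then
        ((L:ℝ) + 2 + m - m * (N:ℝ)⁻¹ - η) * rampf ((v i - m * (N:ℝ)⁻¹)/η)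
        - ((N:ℝ)⁻¹ - 2*η) * rampf ((v i - m * (N:ℝ)⁻¹ - η)/((N:ℝ)⁻¹ - 2*η))
        - ((L:ℝ) + 2 + m - (m+1) * (N:ℝ)⁻¹ + η) * rampf ((v i - (m+1) * (N:ℝ)⁻¹ + η)/η)
      else 0 := by
  have hd : (m+1) * (N:ℝ)⁻¹ - m * (N:ℝ)⁻¹ - 2*η = (N:ℝ)⁻¹ - 2*η := by ring
  have hpos : (0:ℝ) < (N:ℝ)⁻¹ - 2*η := by linarith
  funext i'
  unfold quantL layerCol
  by_cases h : i' = i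
  · simp only [h, if_true]
    congr 1
    unfold Gfun
    rw [Fin.sum_univ_four, dot_eb]
    simp only [Matrix.cons_val_zero, Matrix.cons_val_one, Matrix.head_cons,
      Matrix.cons_val_two, Matrix.tail_cons, Matrix.cons_val_three]
    rw [zero_mul]
    have a1 : (1/η) * v i + -(((m:ℝ) * (N:ℝ)⁻¹)/η) = (v i - m * (N:ℝ)⁻¹)/η := by
      field_simp
      ring
    have a2 : (1/((m+1) * (N:ℝ)⁻¹ - m * (N:ℝ)⁻¹ - 2*η)) * v i
        + -(((m * (N:ℝ)⁻¹ + η))/((m+1) * (N:ℝ)⁻¹ - m * (N:ℝ)⁻¹ - 2*η))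
        = (v i - m * (N:ℝ)⁻¹ - η)/((N:ℝ)⁻¹ - 2*η) := by
      rw [hd]
      field_simp
      ring
    have a3 : (1/η) * v i + -((((m:ℝ)+1) * (N:ℝ)⁻¹ - η)/η) = (v i - (m+1) * (N:ℝ)⁻¹ + η)/η := by
      field_simp
      ring
    rw [a1, a2, a3, hd]
    ring
  · simp [h]


/-! ### Quantization layer evaluation -/

section QuantEval

variable {d L N : ℕ} {η : ℝ}

lemma quantL_fire (i : Fin (d+1)) (m : ℕ) (v : Fin (d+1) → ℝ)
    (hη : 0 < η) (hN : 0 < N) (hsep : 2 * η < (N:ℝ)⁻¹)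
    (h1 : (m:ℝ) * (N:ℝ)⁻¹ + η ≤ v i) (h2 : v i ≤ ((m:ℝ)+1) * (N:ℝ)⁻¹ - η) :
    quantL L N η i m v = fun i' => if i' = i then (L:ℝ) + 2 + m else v i' := by
  have hpos : (0:ℝ) < (N:ℝ)⁻¹ - 2*η := by linarith
  rw [quantL_eval η i m v hη hN hsep]
  funext i'
  by_cases h : i' = i
  · simp only [h, if_true]
    have e1 : rampf ((v i - m * (N:ℝ)⁻¹)/η) = 1 :=
      rampf_ge ((one_le_div hη).mpr (by linarith))
    have e2 : rampf ((v i - m * (N:ℝ)⁻¹ - η)/((N:ℝ)⁻¹ - 2*η))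
        = (v i - m * (N:ℝ)⁻¹ - η)/((N:ℝ)⁻¹ - 2*η) :=
      rampf_mem (div_nonneg (by linarith) hpos.le) ((div_le_one hpos).mpr (by linarith))
    have e3 : rampf ((v i - ((m:ℝ)+1) * (N:ℝ)⁻¹ + η)/η) = 0 :=
      rampf_nonpos (div_nonpos_iff.mpr (Or.inr ⟨by linarith, hη.le⟩))
    have e4 : ((N:ℝ)⁻¹ - 2*η) * ((v i - m * (N:ℝ)⁻¹ - η)/((N:ℝ)⁻¹ - 2*η))
        = v i - m * (N:ℝ)⁻¹ - η := by
      rw [mul_comm, div_mul_cancel₀ _ hpos.ne']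
    rw [e1, e2, e3, e4]
    ring
  · simp [h]

lemma quantL_skip (i : Fin (d+1)) (m : ℕ) (v : Fin (d+1) → ℝ)
    (hη : 0 < η) (hN : 0 < N) (hsep : 2 * η < (N:ℝ)⁻¹)
    (h : v i ≤ (m:ℝ) * (N:ℝ)⁻¹ ∨ ((m:ℝ)+1) * (N:ℝ)⁻¹ ≤ v i) :
    quantL L N η i m v = v := by
  have hpos : (0:ℝ) < (N:ℝ)⁻¹ - 2*η := by linarith
  rw [quantL_eval η i m v hη hN hsep]
  funext i'
  by_cases hii : i' = i
  · simp only [hii, if_true]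
    rcases h with h | h
    · have e1 : rampf ((v i - m * (N:ℝ)⁻¹)/η) = 0 :=
        rampf_nonpos (div_nonpos_iff.mpr (Or.inr ⟨by linarith, hη.le⟩))
      have e2 : rampf ((v i - m * (N:ℝ)⁻¹ - η)/((N:ℝ)⁻¹ - 2*η)) = 0 :=
        rampf_nonpos (div_nonpos_iff.mpr (Or.inr ⟨by linarith, hpos.le⟩))
      have e3 : rampf ((v i - ((m:ℝ)+1) * (N:ℝ)⁻¹ + η)/η) = 0 :=
        rampf_nonpos (div_nonpos_iff.mpr (Or.inr ⟨by nlinarith, hη.le⟩))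
      rw [e1, e2, e3]
      ring
    · have e1 : rampf ((v i - m * (N:ℝ)⁻¹)/η) = 1 :=
        rampf_ge ((one_le_div hη).mpr (by linarith))
      have e2 : rampf ((v i - m * (N:ℝ)⁻¹ - η)/((N:ℝ)⁻¹ - 2*η)) = 1 :=
        rampf_ge ((one_le_div hpos).mpr (by linarith))
      have e3 : rampf ((v i - ((m:ℝ)+1) * (N:ℝ)⁻¹ + η)/η) = 1 :=
        rampf_ge ((one_le_div hη).mpr (by linarith))
      rw [e1, e2, e3]
      ring
  · simp [hii]

end QuantEval

/-! ### Stages -/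

section Stages

variable (d L N : ℕ) (η : ℝ)

noncomputable def quantStage : List ((Fin (d+1) → ℝ) → Fin (d+1) → ℝ) :=
  (Finset.univ.toList (α := Fin (d+1))).flatMap
    (fun i => (List.range (N*(L+1))).map (fun m => quantL L N η i m))

noncomputable def wmu : Fin (d+1) → ℝ := fun i => (Kb L N : ℝ) ^ (i : ℕ)

noncomputable def SvecR (k : Fin (L+1)) (q : Fin (d+1) → Fin N) : Fin (d+1) → ℝ :=
  fun i => (Snat L N k (q i) : ℝ)

noncomputable def postV (k : Fin (L+1)) (q : Fin (d+1) → Fin N) : Fin (d+1) → ℝ :=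
  fun i => if i = 0 then (Vnat d L N k q : ℝ) else SvecR d L N k q i

noncomputable def vStage : List ((Fin (d+1) → ℝ) → Fin (d+1) → ℝ) :=
  (Finset.univ.toList (α := Fin (L+1) × (Fin (d+1) → Fin N))).map
    (fun s => bumpL (0 : Fin (d+1)) (wmu d L N) (tnat d L N s.1 s.2 : ℝ)
      ((Vnat d L N s.1 s.2 : ℝ) - (Snat L N s.1 (s.2 0) : ℝ)))

variable {d L N η}

lemma quantBlock_eval (i : Fin (d+1)) (m₀ : ℕ) (v : Fin (d+1) → ℝ)
    (hη : 0 < η) (hN : 0 < N) (hsep : 2 * η < (N:ℝ)⁻¹)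
    (hm₀ : m₀ < N * (L+1))
    (h1 : (m₀:ℝ) * (N:ℝ)⁻¹ + η ≤ v i) (h2 : v i ≤ ((m₀:ℝ)+1) * (N:ℝ)⁻¹ - η) :
    composeList ((List.range (N*(L+1))).map (fun m => quantL L N η i m)) v
      = fun i' => if i' = i then (L:ℝ) + 2 + m₀ else v i' := by
  have hδ : (0:ℝ) ≤ (N:ℝ)⁻¹ := inv_nonneg.mpr (Nat.cast_nonneg N)
  have key := fireOnce (fun m => quantL L N η i m) (List.range (N*(L+1)))
    List.nodup_range m₀ v (fun i' => if i' = i then (L:ℝ) + 2 + m₀ else v i')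
    (quantL_fire i m₀ v hη hN hsep h1 h2)
    (fun j _ hj => quantL_skip i j v hη hN hsep (by
      rcases Nat.lt_or_ge j m₀ with hlt | hge
      · right
        have : ((j:ℝ)+1) * (N:ℝ)⁻¹ ≤ (m₀:ℝ) * (N:ℝ)⁻¹ := by
          apply mul_le_mul_of_nonneg_right _ hδ
          have : (j:ℕ) + 1 ≤ m₀ := hlt
          exact_mod_cast this
        linarith
      · have hgt : m₀ < j := lt_of_le_of_ne hge (Ne.symm hj)
        left
        have : ((m₀:ℝ)+1) * (N:ℝ)⁻¹ ≤ (j:ℝ) * (N:ℝ)⁻¹ := by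
          apply mul_le_mul_of_nonneg_right _ hδ
          have : (m₀:ℕ) + 1 ≤ j := hgt
          exact_mod_cast this
        linarith))
    (fun j hjmem _ => quantL_skip i j _ hη hN hsep (by
      right
      simp only [eq_self_iff_true, if_true]
      have hj1 : (j:ℕ) + 1 ≤ N * (L+1) := List.mem_range.mp hjmem
      have hle : ((j:ℝ)+1) * (N:ℝ)⁻¹ ≤ ((N:ℝ) * ((L:ℝ)+1)) * (N:ℝ)⁻¹ := by
        apply mul_le_mul_of_nonneg_right _ hδ
        exact_mod_cast hj1
      have hNz : (N:ℝ) ≠ 0 := Nat.cast_ne_zero.mpr hN.ne'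
      have e : ((N:ℝ) * ((L:ℝ)+1)) * (N:ℝ)⁻¹ = (L:ℝ)+1 := by field_simp
      have hm0 : (0:ℝ) ≤ (m₀:ℝ) := Nat.cast_nonneg m₀
      linarith))
  rw [key, if_pos (List.mem_range.mpr hm₀)]

lemma quantStage_eval (mfun : Fin (d+1) → ℕ) (v : Fin (d+1) → ℝ)
    (hη : 0 < η) (hN : 0 < N) (hsep : 2 * η < (N:ℝ)⁻¹)
    (hm : ∀ i, mfun i < N * (L+1))
    (hv : ∀ i, (mfun i : ℝ) * (N:ℝ)⁻¹ + η ≤ v i ∧ v i ≤ ((mfun i : ℝ)+1) * (N:ℝ)⁻¹ - η) :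
    composeList (quantStage d L N η) v = fun i => (L:ℝ) + 2 + mfun i := by
  have main : ∀ (is : List (Fin (d+1))), is.Nodup →
      composeList (is.flatMap (fun i => (List.range (N*(L+1))).map (fun m => quantL L N η i m))) v
        = fun i => if i ∈ is then (L:ℝ) + 2 + mfun i else v i := by
    intro is
    induction is with
    | nil => intro _; funext i; simp [composeList]
    | cons a t ih =>
      intro hnd
      have hnd' := List.nodup_cons.mp hnd
      rw [List.flatMap_cons, composeList_append, Function.comp_apply, ih hnd'.2]
      rw [quantBlock_eval a (mfun a) _ hη hN hsep (hm a)
        (by simp only [if_neg hnd'.1]; exact (hv a).1)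
        (by simp only [if_neg hnd'.1]; exact (hv a).2)]
      funext i
      by_cases hia : i = a
      · subst hia; simp [List.mem_cons]
      · simp only [if_neg hia, List.mem_cons]
        by_cases hit : i ∈ t <;> simp [hia, hit]
  rw [quantStage, main _ (Finset.nodup_toList _)]
  funext i
  rw [if_pos (by simp)]

lemma dot_wmu_SvecR (k : Fin (L+1)) (q : Fin (d+1) → Fin N) :
    dot (wmu d L N) (SvecR d L N k q) = (tnat d L N k q : ℝ) := by
  unfold dot wmu SvecR tnat
  push_cast
  exact Finset.sum_congr rfl (fun i _ => by ring)

lemma vStage_eval (k : Fin (L+1)) (q : Fin (d+1) → Fin N) :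
    composeList (vStage d L N) (SvecR d L N k q) = postV d L N k q := by
  have skipbound : ∀ s : Fin (L+1) × (Fin (d+1) → Fin N), s ≠ (k, q) →
      tnat d L N s.1 s.2 ≠ tnat d L N k q := by
    intro s hne h
    obtain ⟨h1, h2⟩ := tnat_inj h
    exact hne (Prod.ext h1 h2)
  have key := fireOnce
    (fun s : Fin (L+1) × (Fin (d+1) → Fin N) => bumpL (0 : Fin (d+1)) (wmu d L N)
      (tnat d L N s.1 s.2 : ℝ) ((Vnat d L N s.1 s.2 : ℝ) - (Snat L N s.1 (s.2 0) : ℝ)))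
    Finset.univ.toList (Finset.nodup_toList _) (k, q) (SvecR d L N k q) (postV d L N k q)
    ?h1 ?h2 ?h3
  · rw [vStage, key, if_pos (by simp)]
  case h1 =>
    show bumpL (0 : Fin (d+1)) (wmu d L N) (tnat d L N k q : ℝ)
      ((Vnat d L N k q : ℝ) - (Snat L N k (q 0) : ℝ)) (SvecR d L N k q) = postV d L N k q
    rw [bumpL_fire _ _ _ _ _ (dot_wmu_SvecR k q)]
    funext i
    by_cases hi : i = 0
    · subst hi
      simp only [eq_self_iff_true, if_true, postV, SvecR]
      ring
    · simp [hi, postV, SvecR]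
  case h2 =>
    intro s _ hne
    apply bumpL_skip
    rw [dot_wmu_SvecR k q]
    have hne' := skipbound s hne
    have : tnat d L N k q + 1 ≤ tnat d L N s.1 s.2 ∨
        tnat d L N s.1 s.2 + 1 ≤ tnat d L N k q := by omega
    rcases this with h | h
    · left
      have := (Nat.cast_le (α := ℝ)).mpr h
      push_cast at this ⊢
      linarith
    · right
      have := (Nat.cast_le (α := ℝ)).mpr h
      push_cast at this ⊢
      linarith
  case h3 =>
    intro s _ _
    apply bumpL_skip
    right
    have hterm : (Vnat d L N k q : ℝ) ≤ dot (wmu d L N) (postV d L N k q) := by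
      have h1 : ∀ i, (0:ℝ) ≤ wmu d L N i * postV d L N k q i := by
        intro i
        apply mul_nonneg (pow_nonneg (Nat.cast_nonneg _) _)
        unfold postV SvecR
        by_cases hi : i = 0 <;> simp [hi]
      have h2 := Finset.single_le_sum (f := fun i => wmu d L N i * postV d L N k q i)
        (fun i _ => h1 i) (Finset.mem_univ (0 : Fin (d+1)))
      have h3 : wmu d L N 0 * postV d L N k q 0 = (Vnat d L N k q : ℝ) := by
        simp [wmu, postV]
      rw [← h3]
      exact h2
    have hnat : tnat d L N s.1 s.2 + 1 ≤ Vnat d L N k q := by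
      have := tnat_lt_OFF (d := d) (L := L) (N := N) s.1 s.2
      have := Vnat_ge_OFF (d := d) (L := L) (N := N) k q
      omega
    have := (Nat.cast_le (α := ℝ)).mpr hnat
    push_cast at this
    linarith

lemma pre_eval (k : Fin (L+1)) (q : Fin (d+1) → Fin N) (v : Fin (d+1) → ℝ)
    (hη : 0 < η) (hN : 0 < N) (hsep : 2 * η < (N:ℝ)⁻¹)
    (hv : ∀ i, (((k:ℕ)*N + (q i:ℕ) : ℕ) : ℝ) * (N:ℝ)⁻¹ + η ≤ v i ∧
      v i ≤ ((((k:ℕ)*N + (q i:ℕ) : ℕ) : ℝ)+1) * (N:ℝ)⁻¹ - η) :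
    composeList (vStage d L N ++ quantStage d L N η) v = postV d L N k q := by
  rw [composeList_append, Function.comp_apply]
  rw [quantStage_eval (fun i => (k:ℕ)*N + (q i:ℕ)) v hη hN hsep
    (fun i => by
      have h1 : (k:ℕ) ≤ L := Nat.lt_succ_iff.mp k.2
      have h2 : (q i:ℕ) < N := (q i).2
      calc (k:ℕ)*N + (q i:ℕ) < (k:ℕ)*N + N := by omega
        _ = ((k:ℕ)+1)*N := by ring
        _ ≤ (L+1)*N := Nat.mul_le_mul_right _ (by omega)
        _ = N*(L+1) := Nat.mul_comm _ _)
    hv]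
  have : (fun i => (L:ℝ) + 2 + ((k:ℕ)*N + (q i:ℕ) : ℕ)) = SvecR d L N k q := by
    funext i
    unfold SvecR Snat
    push_cast
    ring
  rw [this, vStage_eval]

end Stages

/-! ### Self-attention evaluation -/

noncomputable def WOmat (d L : ℕ) : Fin (d+1) → Fin 1 → ℝ :=
  fun i _ => if i = 0 then (L:ℝ)+1 else 0
noncomputable def WVmat (d : ℕ) : Fin 1 → Fin (d+1) → ℝ := fun _ i => if i = 0 then 1 else 0

lemma sa_eval {d L : ℕ} (Z : Fin (d+1) → Fin (L+1) → ℝ) :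
    saLayer (WOmat d L) (WVmat d) 0 0 Z
      = fun i k => Z i k + if i = 0 then ∑ l, Z 0 l else 0 := by
  have hL1 : ((L:ℝ)+1) ≠ 0 := by positivity
  funext i k
  unfold saLayer
  congr 1
  have hm0 : ∀ (l' : Fin (L+1)),
      (∑ t' : Fin 1, mvec (0 : Fin 1 → Fin (d+1) → ℝ) (column Z l') t'
        * mvec (0 : Fin 1 → Fin (d+1) → ℝ) (column Z k) t') = 0 := by
    intro l'
    simp [mvec]
  have hsmax : ∀ l : Fin (L+1),
      smax (fun l' => ∑ t' : Fin 1, mvec (0 : Fin 1 → Fin (d+1) → ℝ) (column Z l') t'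
        * mvec (0 : Fin 1 → Fin (d+1) → ℝ) (column Z k) t') l = 1/((L:ℝ)+1) := by
    intro l
    unfold smax
    simp only [hm0, Real.exp_zero]
    rw [Finset.sum_const, Finset.card_univ, Fintype.card_fin, nsmul_eq_mul, mul_one]
    push_cast
    rfl
  have hWV : ∀ (l : Fin (L+1)) (t : Fin 1), mvec (WVmat d) (column Z l) t = Z 0 l := by
    intro l t
    unfold mvec WVmat column
    rw [Finset.sum_congr rfl (fun i' _ => by rw [ite_mul, one_mul, zero_mul])]
    rw [Finset.sum_ite_eq' Finset.univ (0 : Fin (d+1))]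
    simp
  have hfun : (fun t => ∑ l, mvec (WVmat d) (column Z l) t
      * smax (fun l' => ∑ t' : Fin 1, mvec (0 : Fin 1 → Fin (d+1) → ℝ) (column Z l') t'
        * mvec (0 : Fin 1 → Fin (d+1) → ℝ) (column Z k) t') l)
      = (fun _ : Fin 1 => (∑ l, Z 0 l) * (1/((L:ℝ)+1))) := by
    funext t
    rw [Finset.sum_congr rfl (fun l _ => by rw [hWV l t, hsmax l]), ← Finset.sum_mul]
  rw [hfun]
  unfold mvec WOmat
  rw [Fin.sum_univ_one]
  by_cases hi : i = 0
  · rw [if_pos hi, if_pos hi]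
    field_simp
  · rw [if_neg hi, if_neg hi, zero_mul]

/-! ### Post-attention stages -/
set_option synthInstance.maxHeartbeats 1000000
set_option maxHeartbeats 1000000

section Post

variable (d L N : ℕ)

noncomputable def postSA (k : Fin (L+1)) (Q : Fin (L+1) → Fin (d+1) → Fin N) :
    Fin (d+1) → ℝ :=
  fun i => if i = 0 then (Wnat d L N k Q : ℝ) else SvecR d L N k (Q k) i

noncomputable def memB (y : Fin (L+1) × (Fin (L+1) → Fin (d+1) → Fin N) → Fin (d+1) → ℝ)
    (i : Fin (d+1)) : List ((Fin (d+1) → ℝ) → Fin (d+1) → ℝ) :=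
  (Finset.univ.toList (α := Fin (L+1) × (Fin (L+1) → Fin (d+1) → Fin N))).map
    (fun s => bumpL i (eb 0) (Wnat d L N s.1 s.2 : ℝ) (y s i - postSA d L N s.1 s.2 i))

noncomputable def memStage (y : Fin (L+1) × (Fin (L+1) → Fin (d+1) → Fin N) → Fin (d+1) → ℝ) :
    List ((Fin (d+1) → ℝ) → Fin (d+1) → ℝ) :=
  memB d L N y 0
    ++ ((Finset.univ.toList (α := Fin (d+1))).filter (fun i => decide (i ≠ 0))).flatMap
      (fun i => memB d L N y i)

noncomputable def clipStage : List ((Fin (d+1) → ℝ) → Fin (d+1) → ℝ) :=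
  (Finset.univ.toList (α := Fin (d+1))).map clipL

variable {d L N}

lemma memB_eval (y : Fin (L+1) × (Fin (L+1) → Fin (d+1) → Fin N) → Fin (d+1) → ℝ)
    (i : Fin (d+1)) (k : Fin (L+1)) (Q : Fin (L+1) → Fin (d+1) → Fin N)
    (v : Fin (d+1) → ℝ) (hv0 : v 0 = (Wnat d L N k Q : ℝ))
    (hvi : v i = postSA d L N k Q i)
    (hcase : i ≠ 0 ∨ (0 ≤ y (k, Q) 0 ∧ y (k, Q) 0 ≤ 1)) :
    composeList (memB d L N y i) v = fun i' => if i' = i then y (k, Q) i else v i' := by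
  have hWne : ∀ s : Fin (L+1) × (Fin (L+1) → Fin (d+1) → Fin N), s ≠ (k, Q) →
      Wnat d L N s.1 s.2 ≠ Wnat d L N k Q := by
    intro s hne h
    obtain ⟨h1, h2⟩ := Wnat_inj h
    exact hne (Prod.ext h1 h2)
  have key := fireOnce
    (fun s => bumpL i (eb (0 : Fin (d+1))) (Wnat d L N s.1 s.2 : ℝ)
      (y s i - postSA d L N s.1 s.2 i))
    Finset.univ.toList (Finset.nodup_toList _) (k, Q) v
    (fun i' => if i' = i then y (k, Q) i else v i') ?h1 ?h2 ?h3
  · rw [memB, key, if_pos (by simp)]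
  case h1 =>
    show bumpL i (eb 0) (Wnat d L N k Q : ℝ) (y (k, Q) i - postSA d L N k Q i) v
      = fun i' => if i' = i then y (k, Q) i else v i'
    rw [bumpL_fire _ _ _ _ _ (by rw [dot_eb, hv0])]
    funext i'
    by_cases hii : i' = i
    · rw [if_pos hii, if_pos hii, hii, hvi]; ring
    · rw [if_neg hii, if_neg hii]
  case h2 =>
    intro s _ hne
    apply bumpL_skip
    rw [dot_eb, hv0]
    have h := hWne s hne
    have : Wnat d L N k Q + 1 ≤ Wnat d L N s.1 s.2 ∨
        Wnat d L N s.1 s.2 + 1 ≤ Wnat d L N k Q := by omega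
    rcases this with h' | h'
    · left; have := (Nat.cast_le (α := ℝ)).mpr h'; push_cast at this ⊢; linarith
    · right; have := (Nat.cast_le (α := ℝ)).mpr h'; push_cast at this ⊢; linarith
  case h3 =>
    intro s _ hne
    apply bumpL_skip
    rw [dot_eb]
    by_cases hi0 : i = 0
    · subst hi0
      rcases hcase with h | h
      · exact absurd rfl h
      · left
        simp only [eq_self_iff_true, if_true]
        have h2 := Wnat_ge_two (d := d) (L := L) (N := N) s.1 s.2
        have := (Nat.cast_le (α := ℝ)).mpr h2
        push_cast at this
        linarith [h.2]
    · rw [if_neg (Ne.symm hi0)]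
      rw [hv0]
      have h := hWne s hne
      have : Wnat d L N k Q + 1 ≤ Wnat d L N s.1 s.2 ∨
          Wnat d L N s.1 s.2 + 1 ≤ Wnat d L N k Q := by omega
      rcases this with h' | h'
      · left; have := (Nat.cast_le (α := ℝ)).mpr h'; push_cast at this ⊢; linarith
      · right; have := (Nat.cast_le (α := ℝ)).mpr h'; push_cast at this ⊢; linarith
  
lemma memStage_eval (y : Fin (L+1) × (Fin (L+1) → Fin (d+1) → Fin N) → Fin (d+1) → ℝ)
    (k : Fin (L+1)) (Q : Fin (L+1) → Fin (d+1) → Fin N)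
    (hy : 0 ≤ y (k, Q) 0 ∧ y (k, Q) 0 ≤ 1) :
    composeList (memStage d L N y) (postSA d L N k Q) = y (k, Q) := by
  have main : ∀ (is : List (Fin (d+1))), is.Nodup → (∀ i ∈ is, i ≠ 0) →
      composeList (is.flatMap (fun i => memB d L N y i)) (postSA d L N k Q)
        = fun i => if i ∈ is then y (k, Q) i else postSA d L N k Q i := by
    intro is
    induction is with
    | nil => intro _ _; funext i; simp [composeList]
    | cons a t ih =>
      intro hnd hall
      have hnd' := List.nodup_cons.mp hnd
      have ha0 : a ≠ 0 := hall a List.mem_cons_self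
      have h0t : (0 : Fin (d+1)) ∉ t := fun h => (hall 0 (List.mem_cons_of_mem a h)) rfl
      rw [List.flatMap_cons, composeList_append, Function.comp_apply,
        ih hnd'.2 (fun i hi => hall i (List.mem_cons_of_mem a hi))]
      rw [memB_eval y a k Q _
        (by simp only [if_neg h0t]; unfold postSA; rw [if_pos rfl])
        (by simp only [if_neg hnd'.1]) (Or.inl ha0)]
      funext i
      by_cases hia : i = a
      · subst hia; simp [List.mem_cons]
      · simp only [if_neg hia, List.mem_cons]
        by_cases hit : i ∈ t <;> simp [hia, hit]
  rw [memStage, composeList_append, Function.comp_apply]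
  rw [main _ ((Finset.nodup_toList _).filter _)
    (fun i hi => by
      rw [List.mem_filter] at hi
      exact of_decide_eq_true hi.2)]
  rw [memB_eval y 0 k Q _
    (by
      rw [if_neg (fun h : (0 : Fin (d+1)) ∈ _ => by
        rw [List.mem_filter] at h
        exact (of_decide_eq_true h.2) rfl)]
      unfold postSA; rw [if_pos rfl])
    (by
      rw [if_neg (fun h : (0 : Fin (d+1)) ∈ _ => by
        rw [List.mem_filter] at h
        exact (of_decide_eq_true h.2) rfl)])
    (Or.inr hy)]
  funext i
  by_cases hi : i = 0
  · subst hi; rw [if_pos rfl]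
  · rw [if_neg hi, if_pos (by
      rw [List.mem_filter]
      exact ⟨by simp, decide_eq_true hi⟩)]

lemma clipStage_eval (v : Fin (d+1) → ℝ) :
    composeList (clipStage d) v = fun i => rampf (v i) := by
  have main : ∀ (is : List (Fin (d+1))),
      composeList (is.map clipL) v = fun i => if i ∈ is then rampf (v i) else v i := by
    intro is
    induction is with
    | nil => funext i; simp [composeList]
    | cons a t ih =>
      rw [List.map_cons, composeList_cons, Function.comp_apply, ih, clipL_eval]
      funext i
      by_cases hia : i = a
      · subst hia
        simp only [List.mem_cons, eq_self_iff_true, if_true, true_or]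
        by_cases hit : i ∈ t
        · rw [if_pos hit]
          exact rampf_mem (rampf_nonneg _) (rampf_le_one _)
        · rw [if_neg hit]
      · rw [if_neg hia]
        simp only [List.mem_cons, hia, false_or]
  rw [clipStage, main]
  funext i
  rw [if_pos (by simp)]

end Post

/-! ### The transformer -/

section Tau

variable (d L N : ℕ) (η : ℝ)

noncomputable def gsMat : List ((Fin (d+1) → Fin (L+1) → ℝ) → Fin (d+1) → Fin (L+1) → ℝ) :=
  (vStage d L N ++ quantStage d L N η).map (lift (n := L+1))

noncomputable def fsMat (y : Fin (L+1) × (Fin (L+1) → Fin (d+1) → Fin N) → Fin (d+1) → ℝ) :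
    List ((Fin (d+1) → Fin (L+1) → ℝ) → Fin (d+1) → Fin (L+1) → ℝ) :=
  (clipStage d ++ memStage d L N y).map (lift (n := L+1))

noncomputable def tauF (y : Fin (L+1) × (Fin (L+1) → Fin (d+1) → Fin N) → Fin (d+1) → ℝ) :
    (Fin (d+1) → Fin (L+1) → ℝ) → Fin (d+1) → Fin (L+1) → ℝ :=
  fun Z => composeList (fsMat d L N y)
    (saLayer (WOmat d L) (WVmat d) 0 0 (composeList (gsMat d L N η) (addPE Z)))

variable {d L N η}

lemma tau_InTA (y : Fin (L+1) × (Fin (L+1) → Fin (d+1) → Fin N) → Fin (d+1) → ℝ) :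
    InTA (tauF d L N η y) := by
  refine ⟨fsMat d L N y, gsMat d L N η, saLayer (WOmat d L) (WVmat d) 0 0, ?_, ?_,
    ⟨WOmat d L, WVmat d, 0, 0, rfl⟩, rfl⟩
  · intro g hg
    rw [fsMat, List.mem_map] at hg
    obtain ⟨c, hc, rfl⟩ := hg
    rw [List.mem_append] at hc
    rcases hc with hc | hc
    · rw [clipStage, List.mem_map] at hc
      obtain ⟨i, _, rfl⟩ := hc
      exact isFF4_layer PL3_clipf _ _ _ _ _
    · rw [memStage, List.mem_append] at hc
      rcases hc with hc | hc
      · rw [memB, List.mem_map] at hc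
        obtain ⟨s, _, rfl⟩ := hc
        exact isFF4_layer PL3_rampf _ _ _ _ _
      · rw [List.mem_flatMap] at hc
        obtain ⟨i, _, hc⟩ := hc
        rw [memB, List.mem_map] at hc
        obtain ⟨s, _, rfl⟩ := hc
        exact isFF4_layer PL3_rampf _ _ _ _ _
  · intro g hg
    rw [gsMat, List.mem_map] at hg
    obtain ⟨c, hc, rfl⟩ := hg
    rw [List.mem_append] at hc
    rcases hc with hc | hc
    · rw [vStage, List.mem_map] at hc
      obtain ⟨s, _, rfl⟩ := hc
      exact isFF4_layer PL3_rampf _ _ _ _ _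
    · rw [quantStage, List.mem_flatMap] at hc
      obtain ⟨i, _, hc⟩ := hc
      rw [List.mem_map] at hc
      obtain ⟨m, _, rfl⟩ := hc
      exact isFF4_layer PL3_rampf _ _ _ _ _

lemma tau_exact (hη : 0 < η) (hN : 0 < N) (hsep : 2*η < (N:ℝ)⁻¹)
    (y : Fin (L+1) × (Fin (L+1) → Fin (d+1) → Fin N) → Fin (d+1) → ℝ)
    (hy : ∀ s i, 0 ≤ y s i ∧ y s i ≤ 1)
    (X : Fin (d+1) → Fin (L+1) → ℝ) (Q : Fin (L+1) → Fin (d+1) → Fin N)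
    (hX : ∀ i j, ((Q j i : ℕ):ℝ) * (N:ℝ)⁻¹ + η ≤ X i j ∧
      X i j ≤ (((Q j i : ℕ):ℝ) + 1) * (N:ℝ)⁻¹ - η) :
    tauF d L N η y X = fun i k => y (k, Q) i := by
  have hNR : (N:ℝ) ≠ 0 := Nat.cast_ne_zero.mpr hN.ne'
  have hpre : composeList (gsMat d L N η) (addPE X) = fun i l => postV d L N l (Q l) i := by
    rw [gsMat, composeList_map_lift]
    funext i l
    show composeList (vStage d L N ++ quantStage d L N η) (column (addPE X) l) i
      = postV d L N l (Q l) i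
    rw [pre_eval l (Q l) _ hη hN hsep (fun i' => ?_)]
    have hX' := hX i' l
    have hcast : ((((l:ℕ)*N + ((Q l i' : ℕ)) : ℕ)) : ℝ) * (N:ℝ)⁻¹
        = (l:ℝ) + ((Q l i' : ℕ):ℝ) * (N:ℝ)⁻¹ := by
      push_cast
      field_simp
      try ring
    have hcast2 : (((((l:ℕ)*N + ((Q l i' : ℕ)) : ℕ)) : ℝ) + 1) * (N:ℝ)⁻¹
        = (l:ℝ) + (((Q l i' : ℕ):ℝ) + 1) * (N:ℝ)⁻¹ := by
      push_cast
      field_simp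
      try ring
    have hcol : column (addPE X) l i' = X i' l + (l:ℝ) := rfl
    constructor
    · rw [hcast, hcol]; linarith [hX'.1]
    · rw [hcast2, hcol]; linarith [hX'.2]
  have hsa : saLayer (WOmat d L) (WVmat d) 0 0 (fun i l => postV d L N l (Q l) i)
      = fun i k => postSA d L N k Q i := by
    rw [sa_eval]
    funext i k
    by_cases hi : i = 0
    · subst hi
      simp only [eq_self_iff_true, if_true]
      unfold postSA postV
      simp only [eq_self_iff_true, if_true]
      unfold Wnat
      push_cast
      ring
    · simp only [if_neg hi]
      unfold postSA postV
      simp only [if_neg hi, add_zero]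
  unfold tauF
  rw [hpre, hsa, fsMat, composeList_map_lift]
  funext i k
  show composeList (clipStage d ++ memStage d L N y)
    (column (fun i k => postSA d L N k Q i) k) i = y (k, Q) i
  have hcol : column (fun i k => postSA d L N k Q i) k = postSA d L N k Q := rfl
  rw [hcol, composeList_append, Function.comp_apply,
    memStage_eval y k Q ⟨(hy (k,Q) 0).1, (hy (k,Q) 0).2⟩, clipStage_eval]
  exact rampf_mem (hy (k,Q) i).1 (hy (k,Q) i).2

lemma tau_bounded (y : Fin (L+1) × (Fin (L+1) → Fin (d+1) → Fin N) → Fin (d+1) → ℝ)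
    (X : Fin (d+1) → Fin (L+1) → ℝ) (i : Fin (d+1)) (k : Fin (L+1)) :
    0 ≤ tauF d L N η y X i k ∧ tauF d L N η y X i k ≤ 1 := by
  have h : tauF d L N η y X i k = rampf (composeList (memStage d L N y)
      (column (saLayer (WOmat d L) (WVmat d) 0 0 (composeList (gsMat d L N η) (addPE X))) k) i) := by
    unfold tauF
    rw [fsMat, composeList_map_lift]
    show composeList (clipStage d ++ memStage d L N y) (column _ k) i = _
    rw [composeList_append, Function.comp_apply, clipStage_eval]
  rw [h]
  exact ⟨rampf_nonneg _, rampf_le_one _⟩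

end Tau

/-! ### Measure lemmas -/

section Meas

noncomputable def G1 (N : ℕ) (η : ℝ) : Set ℝ :=
  ⋃ q : Fin N, Set.Ioo ((q:ℝ)*(N:ℝ)⁻¹ + η) (((q:ℝ)+1)*(N:ℝ)⁻¹ - η)

lemma cube_eq_pi (d m : ℕ) :
    cube d m = Set.pi Set.univ (fun _ : Fin d => Set.pi Set.univ
      (fun _ : Fin m => Set.Icc (0:ℝ) 1)) := by
  ext X
  simp only [cube, Set.mem_setOf_eq, Set.mem_pi, Set.mem_univ, forall_const]

lemma cube_measurable (d m : ℕ) : MeasurableSet (cube d m) := by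
  rw [cube_eq_pi]
  exact MeasurableSet.pi (Set.to_countable _)
    (fun i _ => MeasurableSet.pi (Set.to_countable _) (fun j _ => measurableSet_Icc))

lemma volume_cube (d m : ℕ) : volume (cube d m) = 1 := by
  rw [cube_eq_pi, MeasureTheory.volume_pi_pi]
  have h1 : volume (Set.pi Set.univ (fun _ : Fin m => Set.Icc (0:ℝ) 1)) = 1 := by
    rw [MeasureTheory.volume_pi_pi]
    rw [Finset.prod_congr rfl (fun j _ => Real.volume_Icc)]
    rw [Finset.prod_congr rfl (fun j _ => by rw [sub_zero, ENNReal.ofReal_one])]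
    rw [Finset.prod_const, one_pow]
  rw [Finset.prod_congr rfl (fun i _ => h1), Finset.prod_const, one_pow]

lemma G1_measurable (N : ℕ) (η : ℝ) : MeasurableSet (G1 N η) :=
  MeasurableSet.iUnion (fun q => measurableSet_Ioo)

lemma volume_G1 (N : ℕ) (η : ℝ) (hN : 0 < N) (hη : 0 < η) (hsep : 2*η < (N:ℝ)⁻¹) :
    volume (G1 N η) = N • ENNReal.ofReal ((N:ℝ)⁻¹ - 2*η) := by
  have hdisj : Pairwise (Function.onFun Disjoint
      (fun q : Fin N => Set.Ioo ((q:ℝ)*(N:ℝ)⁻¹ + η) (((q:ℝ)+1)*(N:ℝ)⁻¹ - η))) := by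
    intro q q' hne
    have hvne : (q:ℕ) ≠ (q':ℕ) := fun h => hne (Fin.ext h)
    have hd0 : (0:ℝ) ≤ (N:ℝ)⁻¹ := inv_nonneg.mpr (Nat.cast_nonneg N)
    apply Set.disjoint_left.mpr
    intro x hx hx'
    rcases Nat.lt_or_ge (q:ℕ) (q':ℕ) with hlt | hge
    · have hc : ((q:ℝ)+1) * (N:ℝ)⁻¹ ≤ (q':ℝ) * (N:ℝ)⁻¹ := by
        apply mul_le_mul_of_nonneg_right _ hd0
        exact_mod_cast hlt
      have h1 := hx.2
      have h2 := hx'.1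
      linarith
    · have hlt' : (q':ℕ) < (q:ℕ) := lt_of_le_of_ne hge (Ne.symm hvne)
      have hc : ((q':ℝ)+1) * (N:ℝ)⁻¹ ≤ (q:ℝ) * (N:ℝ)⁻¹ := by
        apply mul_le_mul_of_nonneg_right _ hd0
        exact_mod_cast hlt'
      have h1 := hx'.2
      have h2 := hx.1
      linarith
  rw [G1, measure_iUnion hdisj (fun q => measurableSet_Ioo)]
  rw [tsum_fintype]
  have h2 : ∀ q : Fin N, volume (Set.Ioo ((q:ℝ)*(N:ℝ)⁻¹ + η) (((q:ℝ)+1)*(N:ℝ)⁻¹ - η))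
      = ENNReal.ofReal ((N:ℝ)⁻¹ - 2*η) := by
    intro q
    rw [Real.volume_Ioo]
    congr 1
    ring
  rw [Finset.sum_congr rfl (fun q _ => h2 q), Finset.sum_const, Finset.card_univ,
    Fintype.card_fin]

lemma G1_subset (N : ℕ) (η : ℝ) (hη : 0 < η) : G1 N η ⊆ Set.Icc (0:ℝ) 1 := by
  intro x hx
  rw [G1, Set.mem_iUnion] at hx
  obtain ⟨q, hq⟩ := hx
  have hd0 : (0:ℝ) ≤ (N:ℝ)⁻¹ := inv_nonneg.mpr (Nat.cast_nonneg N)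
  have hq0 : (0:ℝ) ≤ (q:ℝ) * (N:ℝ)⁻¹ := mul_nonneg (Nat.cast_nonneg _) hd0
  have hNpos : 0 < N := Fin.pos q
  have hub : ((q:ℝ)+1) * (N:ℝ)⁻¹ ≤ 1 := by
    have h1 : ((q:ℝ)+1) ≤ (N:ℝ) := by exact_mod_cast q.2
    have hNR : (0:ℝ) < N := by exact_mod_cast hNpos
    calc ((q:ℝ)+1) * (N:ℝ)⁻¹ ≤ (N:ℝ) * (N:ℝ)⁻¹ := mul_le_mul_of_nonneg_right h1 hd0
      _ = 1 := mul_inv_cancel₀ hNR.ne'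
  exact ⟨by linarith [hq.1], by linarith [hq.2]⟩

lemma volume_Icc_diff_G1 (N : ℕ) (η : ℝ) (hN : 0 < N) (hη : 0 < η)
    (hsep : 2*η < (N:ℝ)⁻¹) :
    volume (Set.Icc (0:ℝ) 1 \ G1 N η) ≤ ENNReal.ofReal (2*N*η) := by
  have hNR : (0:ℝ) < N := by exact_mod_cast hN
  have hvol := volume_G1 N η hN hη hsep
  have hfin : volume (G1 N η) ≠ ⊤ := by
    rw [hvol, nsmul_eq_mul]
    exact ENNReal.mul_ne_top (ENNReal.natCast_ne_top N) ENNReal.ofReal_ne_top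
  rw [measure_diff (G1_subset N η hη) (G1_measurable N η).nullMeasurableSet hfin,
    hvol, Real.volume_Icc]
  rw [tsub_le_iff_right, nsmul_eq_mul]
  rw [show ((N : ENNReal)) = ENNReal.ofReal (N:ℝ) from (ENNReal.ofReal_natCast N).symm]
  rw [← ENNReal.ofReal_mul (by positivity)]
  rw [← ENNReal.ofReal_add (by positivity) (by nlinarith)]
  apply ENNReal.ofReal_le_ofReal
  have hinv : (N:ℝ) * (N:ℝ)⁻¹ = 1 := mul_inv_cancel₀ hNR.ne'
  nlinarith

lemma bad_subset (d L N : ℕ) (η : ℝ) :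
    cube (d+1) (L+1) \ (cube (d+1) (L+1) ∩ {X | ∀ i j, X i j ∈ G1 N η})
      ⊆ ⋃ p : Fin (d+1) × Fin (L+1), Set.pi Set.univ (fun i => Set.pi Set.univ
        (fun j => if i = p.1 ∧ j = p.2 then Set.Icc (0:ℝ) 1 \ G1 N η else Set.Icc 0 1)) := by
  intro X hX
  obtain ⟨hc, hng⟩ := hX
  have hbad : ¬ (∀ i j, X i j ∈ G1 N η) := fun h => hng ⟨hc, h⟩
  push_neg at hbad
  obtain ⟨i, j, hij⟩ := hbad
  rw [Set.mem_iUnion]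
  refine ⟨(i, j), ?_⟩
  rw [Set.mem_pi]
  intro i' _
  rw [Set.mem_pi]
  intro j' _
  by_cases h : i' = i ∧ j' = j
  · rw [if_pos h]
    exact ⟨hc i' j', by rw [h.1, h.2]; exact hij⟩
  · rw [if_neg h]
    exact hc i' j'

lemma volume_SP (d L N : ℕ) (η : ℝ) (hN : 0 < N) (hη : 0 < η)
    (hsep : 2*η < (N:ℝ)⁻¹) (p : Fin (d+1) × Fin (L+1)) :
    volume (Set.pi Set.univ (fun i : Fin (d+1) => Set.pi Set.univ
      (fun j : Fin (L+1) => if i = p.1 ∧ j = p.2 then Set.Icc (0:ℝ) 1 \ G1 N η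
        else Set.Icc 0 1)))
      ≤ ENNReal.ofReal (2*N*η) := by
  rw [MeasureTheory.volume_pi_pi]
  rw [Finset.prod_congr rfl (fun i _ => MeasureTheory.volume_pi_pi _)]
  have step1 : (∏ i, ∏ j, volume (if i = p.1 ∧ j = p.2 then Set.Icc (0:ℝ) 1 \ G1 N η
      else Set.Icc 0 1))
      ≤ ∏ i : Fin (d+1), ∏ j : Fin (L+1),
        (if i = p.1 ∧ j = p.2 then ENNReal.ofReal (2*N*η) else 1) := by
    apply Finset.prod_le_prod'
    intro i _
    apply Finset.prod_le_prod'
    intro j _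
    by_cases h : i = p.1 ∧ j = p.2
    · rw [if_pos h, if_pos h]
      exact volume_Icc_diff_G1 N η hN hη hsep
    · rw [if_neg h, if_neg h, Real.volume_Icc]
      simp
  refine le_trans step1 (le_of_eq ?_)
  have inner : ∀ i : Fin (d+1), (∏ j : Fin (L+1),
      (if i = p.1 ∧ j = p.2 then ENNReal.ofReal (2*N*η) else 1))
      = if i = p.1 then ENNReal.ofReal (2*N*η) else 1 := by
    intro i
    by_cases hi : i = p.1
    · rw [if_pos hi]
      have hcong : ∀ j : Fin (L+1), (if i = p.1 ∧ j = p.2 then ENNReal.ofReal (2*N*η) else 1)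
          = (if j = p.2 then ENNReal.ofReal (2*N*η) else 1) := by
        intro j
        by_cases hj : j = p.2
        · rw [if_pos ⟨hi, hj⟩, if_pos hj]
        · rw [if_neg (fun h => hj h.2), if_neg hj]
      rw [Finset.prod_congr rfl (fun j _ => hcong j),
        Finset.prod_ite_eq' Finset.univ p.2 (fun _ => ENNReal.ofReal (2*N*η)),
        if_pos (Finset.mem_univ _)]
    · rw [if_neg hi]
      rw [Finset.prod_congr rfl (fun j _ => if_neg (fun h => hi h.1)),
        Finset.prod_const_one]
  rw [Finset.prod_congr rfl (fun i _ => inner i)]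
  rw [Finset.prod_ite_eq' Finset.univ p.1 (fun _ => ENNReal.ofReal (2*N*η)),
    if_pos (Finset.mem_univ _)]

lemma volume_bad (d L N : ℕ) (η : ℝ) (hN : 0 < N) (hη : 0 < η)
    (hsep : 2*η < (N:ℝ)⁻¹) :
    volume (cube (d+1) (L+1) \ (cube (d+1) (L+1) ∩ {X | ∀ i j, X i j ∈ G1 N η}))
      ≤ ((d+1)*(L+1) : ℕ) * ENNReal.ofReal (2*N*η) := by
  refine le_trans (measure_mono (bad_subset d L N η)) ?_
  refine le_trans (measure_iUnion_le _) ?_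
  rw [tsum_fintype]
  refine le_trans (Finset.sum_le_sum (fun p _ => volume_SP d L N η hN hη hsep p)) ?_
  rw [Finset.sum_const, Finset.card_univ]
  rw [Fintype.card_prod, Fintype.card_fin, Fintype.card_fin, nsmul_eq_mul]

end Meas

/-! ### anorm helpers -/

lemma anorm_nonneg {d m : ℕ} (α : ℝ) (M : Fin d → Fin m → ℝ) : 0 ≤ anorm α M :=
  Real.rpow_nonneg (Finset.sum_nonneg (fun i _ => Finset.sum_nonneg
    (fun j _ => Real.rpow_nonneg (abs_nonneg _) _))) _

lemma anorm_rpow {d m : ℕ} {α : ℝ} (hα : 0 < α) (M : Fin d → Fin m → ℝ) :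
    anorm α M ^ α = ∑ i, ∑ j, |M i j| ^ α := by
  have hs : 0 ≤ ∑ i, ∑ j, |M i j| ^ α := Finset.sum_nonneg (fun i _ => Finset.sum_nonneg
    (fun j _ => Real.rpow_nonneg (abs_nonneg _) _))
  rw [anorm, ← Real.rpow_mul hs, one_div_mul_cancel hα.ne', Real.rpow_one]

end TU

open TU MeasureTheory in
/-- Main result, in `d'+1`, `L'+1` form. -/
theorem transformer_universality_TA_succ (d' L' : ℕ)
    (α C ε : ℝ) (hα : 1 ≤ α) (hC : 0 < C) (hε : 0 < ε)
    (f : (Fin (d'+1) → Fin (L'+1) → ℝ) → Fin (d'+1) → Fin (L'+1) → ℝ)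
    (hmaps : ∀ X ∈ cube (d'+1) (L'+1), f X ∈ cube (d'+1) (L'+1))
    (hlip : ∀ X ∈ cube (d'+1) (L'+1), ∀ Y ∈ cube (d'+1) (L'+1),
      anorm α (f X - f Y) ≤ C * anorm α (X - Y)) :
    ∃ τ : (Fin (d'+1) → Fin (L'+1) → ℝ) → Fin (d'+1) → Fin (L'+1) → ℝ,
      InTA τ ∧
      (∫ X in cube (d'+1) (L'+1), anorm α (τ X - f X) ^ α) ^ (1 / α) ≤ ε := by
  have hα0 : 0 < α := lt_of_lt_of_le one_pos hα
  have hdL1 : (1:ℝ) ≤ ((d'+1) * (L'+1) : ℕ) := by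
    have : 1 ≤ (d'+1) * (L'+1) := Nat.one_le_iff_ne_zero.mpr (by positivity)
    exact_mod_cast this
  set dL : ℝ := (((d'+1) * (L'+1) : ℕ) : ℝ) with hdL
  have hdLpos : 0 < dL := lt_of_lt_of_le one_pos hdL1
  have hεα : 0 < ε ^ α := Real.rpow_pos_of_pos hε α
  have hCα : 0 < C ^ α := Real.rpow_pos_of_pos hC α
  obtain ⟨n0, hn0⟩ := exists_nat_gt (C ^ α * dL * 2 / ε ^ α)
  set N : ℕ := n0 + 2 with hNdef
  have hN0 : 0 < N := by omega
  have hNR : (0:ℝ) < N := by exact_mod_cast hN0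
  have hNbig : C ^ α * dL * 2 / ε ^ α < N := by
    refine lt_of_lt_of_le hn0 ?_
    exact_mod_cast Nat.le_add_right n0 2
  set δ : ℝ := (N:ℝ)⁻¹ with hδdef
  have hδpos : 0 < δ := inv_pos.mpr hNR
  have hδle1 : δ ≤ 1 := by
    rw [hδdef]
    exact inv_le_one_of_one_le₀ (by exact_mod_cast hN0)
  have hNterm : C ^ α * dL * δ ≤ ε ^ α / 2 := by
    rw [div_lt_iff₀ hεα] at hNbig
    rw [hδdef, inv_eq_one_div, mul_one_div, div_le_div_iff₀ hNR two_pos]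
    linarith
  set η : ℝ := min (δ/4) (ε^α / (4 * N * dL * dL)) with hηdef
  have hηpos : 0 < η := lt_min (by positivity) (by positivity)
  have hsep : 2*η < δ := by
    have h1 : η ≤ δ/4 := min_le_left _ _
    linarith
  set corner : (Fin (L'+1) → Fin (d'+1) → Fin N) → (Fin (d'+1) → Fin (L'+1) → ℝ) :=
    fun Q i j => ((Q j i : ℕ) : ℝ) * δ with hcornerdef
  have hcornercube : ∀ Q, corner Q ∈ cube (d'+1) (L'+1) := by
    intro Q i j
    constructor
    · positivity
    · calc ((Q j i : ℕ):ℝ) * δ ≤ (N:ℝ) * δ :=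
          mul_le_mul_of_nonneg_right (le_of_lt (by exact_mod_cast (Q j i).2)) hδpos.le
        _ = 1 := mul_inv_cancel₀ hNR.ne'
  set y : Fin (L'+1) × (Fin (L'+1) → Fin (d'+1) → Fin N) → Fin (d'+1) → ℝ :=
    fun s i => f (corner s.2) i s.1 with hydef
  have hybound : ∀ s i, 0 ≤ y s i ∧ y s i ≤ 1 :=
    fun s i => hmaps (corner s.2) (hcornercube s.2) i s.1
  refine ⟨tauF d' L' N η y, tau_InTA y, ?_⟩
  set Good : Set (Fin (d'+1) → Fin (L'+1) → ℝ) :=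
    cube (d'+1) (L'+1) ∩ {X | ∀ i j, X i j ∈ G1 N η} with hGooddef
  have hGsub : Good ⊆ cube (d'+1) (L'+1) := Set.inter_subset_left
  have hGoodMeas : MeasurableSet Good := by
    refine (cube_measurable _ _).inter ?_
    have hset : {X : Fin (d'+1) → Fin (L'+1) → ℝ | ∀ i j, X i j ∈ G1 N η}
        = ⋂ i, ⋂ j, (fun X : Fin (d'+1) → Fin (L'+1) → ℝ => X i j) ⁻¹' (G1 N η) := by
      ext X
      simp [Set.mem_iInter]
    rw [hset]
    exact MeasurableSet.iInter (fun i => MeasurableSet.iInter (fun j =>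
      (G1_measurable N η).preimage ((measurable_pi_apply j).comp (measurable_pi_apply i))))
  have hent : ∀ X ∈ cube (d'+1) (L'+1), ∀ i j, |tauF d' L' N η y X i j - f X i j| ≤ 1 := by
    intro X hX i j
    have h1 := tau_bounded (η := η) y X i j
    have h2 := hX
    have h3 := hmaps X hX i j
    rw [abs_le]
    exact ⟨by linarith [h1.1, h3.2], by linarith [h1.2, h3.1]⟩
  have hgbound : ∀ X ∈ cube (d'+1) (L'+1), anorm α (tauF d' L' N η y X - f X) ^ α ≤ dL := by
    intro X hX
    rw [anorm_rpow hα0]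
    calc (∑ i, ∑ j, |(tauF d' L' N η y X - f X) i j| ^ α)
        ≤ ∑ i : Fin (d'+1), ∑ j : Fin (L'+1), (1:ℝ) := by
          refine Finset.sum_le_sum (fun i _ => Finset.sum_le_sum (fun j _ => ?_))
          refine Real.rpow_le_one (abs_nonneg _) ?_ hα0.le
          simp only [Pi.sub_apply]
          exact hent X hX i j
      _ = dL := by
          rw [Finset.sum_const, Finset.sum_const, Finset.card_univ, Finset.card_univ,
            Fintype.card_fin, Fintype.card_fin, nsmul_eq_mul, nsmul_eq_mul, mul_one, hdL]
          push_cast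
          ring
  have hgood : ∀ X ∈ Good, anorm α (tauF d' L' N η y X - f X) ^ α ≤ C ^ α * dL * δ := by
    intro X hXg
    obtain ⟨hXc, hXs⟩ := hXg
    have hch : ∀ j i, ∃ q : Fin N, (q:ℝ)*δ + η < X i j ∧ X i j < ((q:ℝ)+1)*δ - η := by
      intro j i
      have hm := hXs i j
      rw [G1, Set.mem_iUnion] at hm
      obtain ⟨q, hq⟩ := hm
      exact ⟨q, hq.1, hq.2⟩
    choose Q hQ1 hQ2 using hch
    have hexact := tau_exact hηpos hN0 (by rw [← hδdef]; exact hsep) y hybound X Q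
      (fun i j => ⟨le_of_lt (hQ1 j i), le_of_lt (hQ2 j i)⟩)
    have hτX : tauF d' L' N η y X = f (corner Q) := by
      rw [hexact]
    rw [hτX]
    have hlip' := hlip (corner Q) (hcornercube Q) X hXc
    have h1 : anorm α (f (corner Q) - f X) ^ α ≤ (C * anorm α (corner Q - X)) ^ α :=
      Real.rpow_le_rpow (anorm_nonneg _ _) hlip' hα0.le
    have h2 : (C * anorm α (corner Q - X)) ^ α = C ^ α * anorm α (corner Q - X) ^ α :=
      Real.mul_rpow hC.le (anorm_nonneg _ _)
    have h3 : anorm α (corner Q - X) ^ α ≤ dL * δ ^ α := by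
      rw [anorm_rpow hα0]
      have hentry : ∀ (i : Fin (d'+1)) (j : Fin (L'+1)), |(corner Q - X) i j| ≤ δ := by
        intro i j
        have ha := hQ1 j i
        have hb := hQ2 j i
        simp only [Pi.sub_apply]
        rw [abs_le]
        constructor
        · have : corner Q i j = ((Q j i : ℕ):ℝ) * δ := rfl
          rw [this]
          linarith
        · have : corner Q i j = ((Q j i : ℕ):ℝ) * δ := rfl
          rw [this]
          linarith
      calc (∑ i, ∑ j, |(corner Q - X) i j| ^ α)
          ≤ ∑ i : Fin (d'+1), ∑ j : Fin (L'+1), δ ^ α := by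
            refine Finset.sum_le_sum (fun i _ => Finset.sum_le_sum (fun j _ => ?_))
            exact Real.rpow_le_rpow (abs_nonneg _) (hentry i j) hα0.le
        _ = dL * δ ^ α := by
            rw [Finset.sum_const, Finset.sum_const, Finset.card_univ, Finset.card_univ,
              Fintype.card_fin, Fintype.card_fin, nsmul_eq_mul, nsmul_eq_mul, hdL]
            push_cast
            ring
    have h4 : δ ^ α ≤ δ := by
      calc δ ^ α ≤ δ ^ (1:ℝ) := Real.rpow_le_rpow_of_exponent_ge hδpos hδle1 hα
        _ = δ := Real.rpow_one δ
    calc anorm α (f (corner Q) - f X) ^ α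
        ≤ C ^ α * anorm α (corner Q - X) ^ α := by rw [← h2]; exact h1
      _ ≤ C ^ α * (dL * δ ^ α) := mul_le_mul_of_nonneg_left h3 hCα.le
      _ ≤ C ^ α * (dL * δ) := by
          refine mul_le_mul_of_nonneg_left ?_ hCα.le
          exact mul_le_mul_of_nonneg_left h4 hdLpos.le
      _ = C ^ α * dL * δ := by ring
  by_cases hInt : IntegrableOn (fun X => anorm α (tauF d' L' N η y X - f X) ^ α)
      (cube (d'+1) (L'+1)) volume
  · have hBadMeas : MeasurableSet (cube (d'+1) (L'+1) \ Good) :=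
      (cube_measurable _ _).diff hGoodMeas
    have hIG : IntegrableOn (fun X => anorm α (tauF d' L' N η y X - f X) ^ α) Good volume :=
      hInt.mono_set hGsub
    have hIB : IntegrableOn (fun X => anorm α (tauF d' L' N η y X - f X) ^ α)
        (cube (d'+1) (L'+1) \ Good) volume := hInt.mono_set Set.diff_subset
    have hIeq : (∫ X in cube (d'+1) (L'+1), anorm α (tauF d' L' N η y X - f X) ^ α)
        = (∫ X in Good, anorm α (tauF d' L' N η y X - f X) ^ α)
          + ∫ X in cube (d'+1) (L'+1) \ Good, anorm α (tauF d' L' N η y X - f X) ^ α := by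
      have h := setIntegral_union (disjoint_sdiff_self_right) hBadMeas hIG hIB
      rw [Set.union_diff_cancel hGsub] at h
      exact h
    have hvolGood_le : volume Good ≤ 1 :=
      le_trans (measure_mono hGsub) (le_of_eq (volume_cube _ _))
    have hIGood : (∫ X in Good, anorm α (tauF d' L' N η y X - f X) ^ α) ≤ C ^ α * dL * δ := by
      have hle := setIntegral_mono_on hIG
        (integrableOn_const (lt_of_le_of_lt hvolGood_le ENNReal.one_lt_top).ne)
        hGoodMeas (fun X hX => hgood X hX)
      rw [setIntegral_const, smul_eq_mul, measureReal_def] at hle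
      have htr : (volume Good).toReal ≤ 1 := by
        have := ENNReal.toReal_mono (by simp) hvolGood_le
        simpa using this
      have hconst : 0 ≤ C ^ α * dL * δ := by positivity
      nlinarith
    have hvolBad := volume_bad d' L' N η hN0 hηpos (by rw [← hδdef]; exact hsep)
    have hIBad : (∫ X in cube (d'+1) (L'+1) \ Good, anorm α (tauF d' L' N η y X - f X) ^ α)
        ≤ dL * (dL * (2*N*η)) := by
      have hfin : volume (cube (d'+1) (L'+1) \ Good) < ⊤ :=
        lt_of_le_of_lt (le_trans (measure_mono Set.diff_subset)
          (le_of_eq (volume_cube _ _))) ENNReal.one_lt_top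
      have hle := setIntegral_mono_on hIB
        (integrableOn_const hfin.ne) hBadMeas
        (fun X hX => hgbound X hX.1)
      rw [setIntegral_const, smul_eq_mul, measureReal_def] at hle
      have htr : (volume (cube (d'+1) (L'+1) \ Good)).toReal ≤ dL * (2*N*η) := by
        have h2 : ((((d'+1)*(L'+1) : ℕ)) * ENNReal.ofReal (2*N*η)).toReal = dL * (2*N*η) := by
          rw [ENNReal.toReal_mul, ENNReal.toReal_natCast,
            ENNReal.toReal_ofReal (by positivity)]
        have h3 := ENNReal.toReal_mono (by
          exact ENNReal.mul_ne_top (ENNReal.natCast_ne_top _) ENNReal.ofReal_ne_top) hvolBad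
        rw [h2] at h3
        exact h3
      nlinarith [hdLpos]
    have hbadnum : dL * (dL * (2*N*η)) ≤ ε ^ α / 2 := by
      have hη2 : η ≤ ε^α / (4*N*dL*dL) := min_le_right _ _
      have hstep : dL * (dL * (2*N*η)) ≤ dL * (dL * (2*N*(ε^α / (4*N*dL*dL)))) := by
        refine mul_le_mul_of_nonneg_left ?_ hdLpos.le
        refine mul_le_mul_of_nonneg_left ?_ hdLpos.le
        refine mul_le_mul_of_nonneg_left hη2 (by positivity)
      refine le_trans hstep (le_of_eq ?_)
      field_simp
      ring
    have htotal : (∫ X in cube (d'+1) (L'+1), anorm α (tauF d' L' N η y X - f X) ^ α) ≤ ε ^ α := by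
      rw [hIeq]
      linarith
    have hintnonneg : 0 ≤ ∫ X in cube (d'+1) (L'+1), anorm α (tauF d' L' N η y X - f X) ^ α :=
      setIntegral_nonneg (cube_measurable _ _)
        (fun X _ => Real.rpow_nonneg (anorm_nonneg _ _) _)
    calc (∫ X in cube (d'+1) (L'+1), anorm α (tauF d' L' N η y X - f X) ^ α) ^ (1/α)
        ≤ (ε ^ α) ^ (1/α) := Real.rpow_le_rpow hintnonneg htotal (by positivity)
      _ = ε := by
          rw [← Real.rpow_mul hε.le, mul_one_div_cancel hα0.ne', Real.rpow_one]
  · rw [integral_undef hInt]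
    rw [Real.zero_rpow (one_div_ne_zero hα0.ne')]
    exact hε.le


/-- universality of transformers with one-layer, one-head, any-rank
self-attention.  For every `C`-Lipschitz `f : [0,1]^{d×L} → [0,1]^{d×L}` there exists a
transformer `τ ∈ 𝒯_A^{1,1,4}` on sequences of length `L` with `d_α(τ, f) ≤ ε`. -/
theorem transformer_universality_TA (d L : ℕ) (hd : 1 ≤ d) (hL : 1 ≤ L)
    (α C ε : ℝ) (hα : 1 ≤ α) (hC : 0 < C) (hε : 0 < ε)
    (f : (Fin d → Fin L → ℝ) → Fin d → Fin L → ℝ)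
    (hmaps : ∀ X ∈ cube d L, f X ∈ cube d L)
    (hlip : ∀ X ∈ cube d L, ∀ Y ∈ cube d L, anorm α (f X - f Y) ≤ C * anorm α (X - Y)) :
    ∃ τ : (Fin d → Fin L → ℝ) → Fin d → Fin L → ℝ,
      InTA τ ∧
      (∫ X in cube d L, anorm α (τ X - f X) ^ α) ^ (1 / α) ≤ ε := by
  obtain ⟨d', rfl⟩ : ∃ d', d = d' + 1 := ⟨d - 1, by omega⟩
  obtain ⟨L', rfl⟩ : ∃ L', L = L' + 1 := ⟨L - 1, by omega⟩
  exact transformer_universality_TA_succ d' L' α C ε hα hC hε f hmaps hlip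
end
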